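/- arXiv:1201.2524 — 3 statements merged into one kernel-verified Lean document; each statement's English description precedes it below -/
import Mathlib

section
/- Define S(n) = Σ_{k=0}^{n} binom(n,k) (−1)^k (1/2)_{n−k} (1/2)_k / (3/2)_n. Then for even n = 2m with m ≥ 1, S(2m) = ∏_{j=1}^{m} (2m+2j) / ∏_{j=0}^{m} (2m+2j+1), i.e. S(2m) = (2m+2)(2m+4)⋯(4m) / ((2m+1)(2m+3)⋯(4m+1)). Equivalently S(2m) = 2^m (2m)! / (m! (2m+1)(2m+3)⋯(4m+1)). -/
open Finset Polynomial

noncomputable def Cq (k : ℕ) : ℚ := (Nat.centralBinom k : ℚ)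

lemma Cq_pos (n : ℕ) : (0:ℚ) < Cq n := by
  unfold Cq; exact_mod_cast Nat.centralBinom_pos n

lemma crec (k : ℕ) : ((k:ℚ)+1) * Cq (k+1) = (4*k+2) * Cq k := by
  have h := Nat.succ_mul_centralBinom_succ k
  have h2 : (((k+1) * Nat.centralBinom (k+1) : ℕ) : ℚ) = ((2 * (2*k+1) * Nat.centralBinom k : ℕ) : ℚ) := by
    exact_mod_cast h
  push_cast at h2
  unfold Cq; linarith

lemma Cq_succ (k : ℕ) : Cq (k+1) = (4*(k:ℚ)+2) * Cq k / ((k:ℚ)+1) := by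
  have h := crec k
  have hk : ((k:ℚ)+1) ≠ 0 := by positivity
  field_simp
  linarith

lemma Cq_zero : Cq 0 = 1 := by simp [Cq, Nat.centralBinom]
lemma Cq_one : Cq 1 = 2 := by simp [Cq]; rfl

lemma perterm (k j : ℕ) :
    ((k:ℚ)+j+2) * (-1)^k * Cq k * Cq (j+2) - 16*((k:ℚ)+j+1) * (-1)^k * Cq k * Cq j
      = (-1)^(k+1) * (2*((k:ℚ)+1)) * Cq (k+1) * Cq j / ((j:ℚ)+1)
        - (-1)^k * (2*(k:ℚ)) * Cq k * Cq (j+1) / ((j:ℚ)+2) := by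
  rw [Cq_succ k, show j+2 = (j+1)+1 from rfl, Cq_succ (j+1), Cq_succ j]
  have h1 : ((k:ℚ)+1) ≠ 0 := by positivity
  have h2 : ((j:ℚ)+1) ≠ 0 := by positivity
  have h3 : ((j:ℚ)+1+1) ≠ 0 := by positivity
  have h4 : ((j:ℚ)+2) ≠ 0 := by positivity
  field_simp
  push_cast
  ring

lemma key (n : ℕ) :
    ((n:ℚ)+2) * ∑ k ∈ range (n+3), (-1:ℚ)^k * Cq k * Cq (n+2-k)
      = 16*((n:ℚ)+1) * ∑ k ∈ range (n+1), (-1:ℚ)^k * Cq k * Cq (n-k) := by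
  set g : ℕ → ℚ := fun k => (-1)^k * (2*(k:ℚ)) * Cq k * Cq (n+1-k) / ((n+2-k : ℕ) : ℚ) with hg
  have step : ∀ k ∈ range (n+1),
      ((n:ℚ)+2) * ((-1:ℚ)^k * Cq k * Cq (n+2-k))
        = 16*((n:ℚ)+1) * ((-1:ℚ)^k * Cq k * Cq (n-k)) + (g (k+1) - g k) := by
    intro k hk
    rw [mem_range] at hk
    have hkn : k ≤ n := Nat.lt_succ_iff.mp hk
    obtain ⟨j, rfl⟩ : ∃ j, n = k + j := ⟨n - k, (Nat.add_sub_cancel' hkn).symm⟩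
    have e1 : k + j + 2 - k = j + 2 := by omega
    have e2 : k + j - k = j := by omega
    have e3 : k + j + 1 - k = j + 1 := by omega
    have e4 : k + j + 2 - (k+1) = j + 1 := by omega
    have e5 : k + j + 1 - (k+1) = j := by omega
    have hpt := perterm k j
    simp only [hg, e1, e2, e3, e4, e5]
    push_cast
    push_cast at hpt
    linear_combination hpt
  have tel : ∑ k ∈ range (n+1), (g (k+1) - g k) = g (n+1) - g 0 :=
    Finset.sum_range_sub g (n+1)
  have hsum : ∑ k ∈ range (n+1), ((n:ℚ)+2) * ((-1:ℚ)^k * Cq k * Cq (n+2-k))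
      = 16*((n:ℚ)+1) * (∑ k ∈ range (n+1), (-1:ℚ)^k * Cq k * Cq (n-k)) + (g (n+1) - g 0) := by
    rw [Finset.sum_congr rfl step, Finset.sum_add_distrib, tel, Finset.mul_sum]
  have hg0 : g 0 = 0 := by simp [hg]
  have hgn : g (n+1) = (-1:ℚ)^(n+1) * (2*((n:ℚ)+1)) * Cq (n+1) := by
    simp only [hg]
    have e1 : n + 1 - (n+1) = 0 := by omega
    have e2 : n + 2 - (n+1) = 1 := by omega
    rw [e1, e2, Cq_zero]
    push_cast
    ring
  have hb : n + 2 - (n+1) = 1 := by omega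
  have hb2 : n + 2 - (n+2) = 0 := by omega
  rw [show n+3 = (n+2)+1 from rfl, Finset.sum_range_succ, Finset.sum_range_succ, hb, hb2,
    Cq_zero, Cq_one]
  rw [mul_add, mul_add, Finset.mul_sum]
  rw [hsum, hg0, hgn]
  have hc := crec (n+1)
  have hs : (-1:ℚ)^(n+1) = -(-1:ℚ)^n := by rw [pow_succ]; ring
  have hs2 : (-1:ℚ)^(n+2) = (-1:ℚ)^n := by rw [pow_add]; ring
  rw [hs, hs2]
  push_cast at hc ⊢
  linear_combination ((-1:ℚ)^n) * hc

lemma alt (m : ℕ) :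
    ∑ k ∈ range (2*m+1), (-1:ℚ)^k * Cq k * Cq (2*m-k) = 4^m * Cq m := by
  induction m with
  | zero => simp [Cq_zero]
  | succ m ih =>
    have hk := key (2*m)
    rw [ih] at hk
    have e1 : 2*(m+1)+1 = 2*m+3 := by ring
    have hne : ((2*m:ℚ)+2) ≠ 0 := by positivity
    rw [e1]
    have e2 : ∀ k, 2*(m+1)-k = 2*m+2-k := fun k => by omega
    have hsc : ∑ k ∈ range (2*m+3), (-1:ℚ)^k * Cq k * Cq (2*(m+1)-k)
        = ∑ k ∈ range (2*m+3), (-1:ℚ)^k * Cq k * Cq (2*m+2-k) := by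
      refine Finset.sum_congr rfl fun k _ => by rw [e2 k]
    rw [hsc]
    apply mul_left_cancel₀ hne
    have hc := crec m
    push_cast at hc hk ⊢
    rw [hk]
    linear_combination (-8*(4:ℚ)^m) * hc

lemma pochHalf (k : ℕ) :
    (ascPochhammer ℚ k).eval (1/2) = Cq k * (k.factorial : ℚ) / 4^k := by
  induction k with
  | zero => simp [Cq, Nat.centralBinom]
  | succ k ih =>
    rw [ascPochhammer_succ_right, eval_mul, ih, eval_add, eval_X, eval_natCast]
    have hc := crec k
    have h4 : (4:ℚ)^(k+1) = 4 * 4^k := by ring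
    rw [h4]
    have hf : ((k+1).factorial : ℚ) = ((k:ℚ)+1) * (k.factorial : ℚ) := by
      push_cast [Nat.factorial_succ]; ring
    rw [hf]
    have h4k : (4:ℚ)^k ≠ 0 := by positivity
    field_simp
    linear_combination (-2:ℚ) * hc

lemma pochThreeHalf (n : ℕ) :
    (ascPochhammer ℚ n).eval (3/2) = 2 * Cq (n+1) * ((n+1).factorial : ℚ) / 4^(n+1) := by
  have h := pochHalf (n+1)
  rw [ascPochhammer_succ_left, eval_mul, eval_X, eval_comp, eval_add, eval_X, eval_one] at h
  norm_num at h
  linear_combination 2*h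

lemma fac_prod (b t : ℕ) : b.factorial * ∏ j ∈ range t, (b+1+j) = (b+t).factorial := by
  induction t with
  | zero => simp
  | succ t ih =>
    rw [prod_range_succ, ← mul_assoc, ih, show b+(t+1) = (b+t)+1 from rfl,
      Nat.factorial_succ]
    ring

lemma interleave (a t : ℕ) :
    (∏ j ∈ range t, (a+2*j)) * (∏ j ∈ range t, (a+2*j+1)) = ∏ i ∈ range (2*t), (a+i) := by
  induction t with
  | zero => simp
  | succ t ih =>
    rw [prod_range_succ, prod_range_succ, show 2*(t+1) = (2*t)+1+1 by ring,
      prod_range_succ, prod_range_succ, ← ih]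
    ring

lemma prod1 (m : ℕ) :
    m.factorial * ∏ j ∈ range m, (2*m+2*(j+1)) = 2^m * (2*m).factorial := by
  have h1 : ∏ j ∈ range m, (2*m+2*(j+1)) = (∏ j ∈ range m, 2) * ∏ j ∈ range m, (m+1+j) := by
    rw [← prod_mul_distrib]
    exact prod_congr rfl fun j _ => by ring
  rw [h1, prod_const, card_range, ← mul_assoc, mul_comm m.factorial, mul_assoc, fac_prod,
    show m + m = 2*m by ring]

lemma prod2 (m : ℕ) :
    (∏ j ∈ range (m+1), (2*m+2*j+1)) * (2^(m+1) * (2*m+1).factorial) * (2*m).factorial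
      = m.factorial * (4*m+2).factorial := by
  have h1 := interleave (2*m+1) (m+1)
  have h2 : ∏ j ∈ range (m+1), (2*m+1+2*j) = ∏ j ∈ range (m+1), (2*m+2*j+1) :=
    prod_congr rfl fun j _ => by ring
  have h3 : ∏ j ∈ range (m+1), (2*m+1+2*j+1) = (∏ j ∈ range (m+1), 2) * ∏ j ∈ range (m+1), (m+1+j) := by
    rw [← prod_mul_distrib]; exact prod_congr rfl fun j _ => by ring
  rw [h2, h3, prod_const, card_range] at h1
  have h4 := fac_prod m (m+1)
  have h5 := fac_prod (2*m) (2*m+2)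
  have e1 : m + (m+1) = 2*m+1 := by ring
  have e2 : 2*m + (2*m+2) = 4*m+2 := by ring
  rw [e1] at h4
  rw [e2] at h5
  have h6 : ∏ i ∈ range (2*(m+1)), (2*m+1+i) = ∏ i ∈ range (2*m+2), (2*m+1+i) := by
    rw [show 2*(m+1) = 2*m+2 by ring]
  calc (∏ j ∈ range (m+1), (2*m+2*j+1)) * (2^(m+1) * (2*m+1).factorial) * (2*m).factorial
      = (∏ j ∈ range (m+1), (2*m+2*j+1)) * (2^(m+1) * (m.factorial * ∏ j ∈ range (m+1), (m+1+j))) * (2*m).factorial := by rw [h4]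
    _ = m.factorial * ((2*m).factorial * ((∏ j ∈ range (m+1), (2*m+2*j+1)) * (2^(m+1) * ∏ j ∈ range (m+1), (m+1+j)))) := by ring
    _ = m.factorial * ((2*m).factorial * ∏ i ∈ range (2*(m+1)), (2*m+1+i)) := by rw [h1]
    _ = m.factorial * (4*m+2).factorial := by rw [h6, h5]

lemma centralBinom_fac (n : ℕ) :
    Cq n * ((n.factorial:ℚ) * (n.factorial:ℚ)) = (((2*n).factorial):ℚ) := by
  have h := Nat.choose_mul_factorial_mul_factorial (show n ≤ 2*n by omega)
  rw [show 2*n - n = n by omega] at h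
  have h' : (((2*n).choose n * n.factorial * n.factorial : ℕ):ℚ) = (((2*n).factorial : ℕ):ℚ) := by
    exact_mod_cast h
  push_cast at h'
  unfold Cq
  rw [Nat.centralBinom_eq_two_mul_choose]
  linear_combination h'

/-- For even `n = 2m`, `m ≥ 1`, the moment sum
`S(2m) = ∑_{k=0}^{2m} C(2m,k) (-1)^k (1/2)_{2m-k} (1/2)_k / (3/2)_{2m}` equals
`(2m+2)(2m+4)⋯(4m) / ((2m+1)(2m+3)⋯(4m+1))`, which also equals
`2^m (2m)! / (m! (2m+1)(2m+3)⋯(4m+1))`. -/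
theorem stmt_7 (m : ℕ) (hm : 1 ≤ m) :
    (∑ k ∈ Finset.range (2 * m + 1),
      ((2 * m).choose k : ℚ) * (-1) ^ k *
        (ascPochhammer ℚ (2 * m - k)).eval (1 / 2) * (ascPochhammer ℚ k).eval (1 / 2)
        / (ascPochhammer ℚ (2 * m)).eval (3 / 2))
      = (∏ j ∈ Finset.range m, ((2 * m + 2 * (j + 1) : ℕ) : ℚ))
        / (∏ j ∈ Finset.range (m + 1), ((2 * m + 2 * j + 1 : ℕ) : ℚ)) ∧
    (∏ j ∈ Finset.range m, ((2 * m + 2 * (j + 1) : ℕ) : ℚ))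
        / (∏ j ∈ Finset.range (m + 1), ((2 * m + 2 * j + 1 : ℕ) : ℚ))
      = 2 ^ m * ((2 * m).factorial : ℚ)
        / ((m.factorial : ℚ) * ∏ j ∈ Finset.range (m + 1), ((2 * m + 2 * j + 1 : ℕ) : ℚ)) := by
  have hfm : (m.factorial : ℚ) ≠ 0 := Nat.cast_ne_zero.mpr m.factorial_ne_zero
  have hf2m : ((2*m).factorial : ℚ) ≠ 0 := Nat.cast_ne_zero.mpr (2*m).factorial_ne_zero
  have hf2m1 : ((2*m+1).factorial : ℚ) ≠ 0 := Nat.cast_ne_zero.mpr (2*m+1).factorial_ne_zero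
  have hf4m2 : ((4*m+2).factorial : ℚ) ≠ 0 := Nat.cast_ne_zero.mpr (4*m+2).factorial_ne_zero
  have hQcast : (∏ j ∈ range (m+1), ((2*m+2*j+1 : ℕ):ℚ))
      = ((∏ j ∈ range (m+1), (2*m+2*j+1) : ℕ) : ℚ) := by push_cast; rfl
  have hPcast : (∏ j ∈ range m, ((2*m+2*(j+1) : ℕ):ℚ))
      = ((∏ j ∈ range m, (2*m+2*(j+1)) : ℕ) : ℚ) := by push_cast; rfl
  have eQ : (∏ j ∈ range (m+1), ((2*m+2*j+1 : ℕ):ℚ))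
      = (m.factorial:ℚ) * ((4*m+2).factorial:ℚ)
        / (2^(m+1) * ((2*m+1).factorial:ℚ) * ((2*m).factorial:ℚ)) := by
    rw [hQcast, eq_div_iff (by positivity)]
    have h := prod2 m
    have h2 : ((((∏ j ∈ range (m+1), (2*m+2*j+1)) * (2^(m+1) * (2*m+1).factorial) * (2*m).factorial : ℕ)):ℚ)
        = ((m.factorial * (4*m+2).factorial : ℕ) : ℚ) := by exact_mod_cast h
    push_cast at h2 ⊢
    linear_combination h2
  have eP : (∏ j ∈ range m, ((2*m+2*(j+1) : ℕ):ℚ))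
      = 2^m * ((2*m).factorial:ℚ) / (m.factorial:ℚ) := by
    rw [hPcast, eq_div_iff hfm]
    have h := prod1 m
    have h2 : ((m.factorial * ∏ j ∈ range m, (2*m+2*(j+1)) : ℕ):ℚ)
        = ((2^m * (2*m).factorial : ℕ):ℚ) := by exact_mod_cast h
    push_cast at h2 ⊢
    linear_combination h2
  have eCm : Cq m = ((2*m).factorial:ℚ) / ((m.factorial:ℚ) * (m.factorial:ℚ)) := by
    rw [eq_div_iff (by positivity)]
    linear_combination centralBinom_fac m
  have eC2 : Cq (2*m+1) = ((4*m+2).factorial:ℚ)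
      / (((2*m+1).factorial:ℚ) * ((2*m+1).factorial:ℚ)) := by
    rw [eq_div_iff (by positivity)]
    have h := centralBinom_fac (2*m+1)
    rw [show 2*(2*m+1) = 4*m+2 by ring] at h
    linear_combination h
  have hD := pochThreeHalf (2*m)
  have hDne : (ascPochhammer ℚ (2*m)).eval (3/2) ≠ 0 := by
    rw [hD]
    have h1 := Cq_pos (2*m+1)
    positivity
  constructor
  · have hstep : ∀ k ∈ range (2*m+1),
        ((2 * m).choose k : ℚ) * (-1) ^ k *
          (ascPochhammer ℚ (2 * m - k)).eval (1 / 2) * (ascPochhammer ℚ k).eval (1 / 2)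
          / (ascPochhammer ℚ (2 * m)).eval (3 / 2)
        = (((2*m).factorial:ℚ) / (4^(2*m) * (ascPochhammer ℚ (2*m)).eval (3/2)))
            * ((-1:ℚ)^k * Cq k * Cq (2*m-k)) := by
      intro k hk
      rw [mem_range] at hk
      have hk' : k ≤ 2*m := by omega
      have hch := Nat.choose_mul_factorial_mul_factorial hk'
      have hch2 : (((2*m).choose k : ℕ):ℚ) * ((k.factorial:ℕ):ℚ) * (((2*m-k).factorial:ℕ):ℚ)
          = (((2*m).factorial : ℕ):ℚ) := by exact_mod_cast hch
      have h4 : (4:ℚ)^(2*m-k) = 4^(2*m) / 4^k := by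
        rw [eq_div_iff (by positivity : (4:ℚ)^k ≠ 0), ← pow_add, Nat.sub_add_cancel hk']
      rw [pochHalf k, pochHalf (2*m-k), h4]
      set E := (ascPochhammer ℚ (2*m)).eval (3/2) with hE
      set A := Cq k with hA
      set B := Cq (2*m-k) with hB
      set F1 := (k.factorial:ℚ) with hF1
      set F2 := ((2*m-k).factorial:ℚ) with hF2
      set CH := (((2*m).choose k : ℕ):ℚ) with hCH
      set G := ((2*m).factorial:ℚ) with hG
      set u := (4:ℚ)^k with hu
      set v := (4:ℚ)^(2*m) with hv
      have h4k : u ≠ 0 := by rw [hu]; positivity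
      have h42m : v ≠ 0 := by rw [hv]; positivity
      field_simp
      linear_combination (A * B) * hch2
    rw [Finset.sum_congr rfl hstep, ← Finset.mul_sum, alt m]
    rw [hD, eC2, eCm, eQ, eP]
    have p1 : (4:ℚ)^m = 2^(2*m) := by
      rw [show (4:ℚ) = 2^2 by norm_num, ← pow_mul]
    have p2 : (4:ℚ)^(2*m) = 2^(4*m) := by
      rw [show (4:ℚ) = 2^2 by norm_num, ← pow_mul, show 2*(2*m) = 4*m by ring]
    have p3 : (4:ℚ)^(2*m+1) = 2^(4*m+2) := by
      rw [show (4:ℚ) = 2^2 by norm_num, ← pow_mul, show 2*(2*m+1) = 4*m+2 by ring]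
    rw [p1, p2, p3]
    set a := (m.factorial:ℚ) with ha
    set b := ((2*m).factorial:ℚ) with hb
    set c := ((2*m+1).factorial:ℚ) with hc
    set d := ((4*m+2).factorial:ℚ) with hd
    have q1 : (2:ℚ)^(2*m) = 2^m * 2^m := by rw [← pow_add, two_mul]
    have q2 : (2:ℚ)^(4*m) = 2^m * 2^m * 2^m * 2^m := by
      rw [← pow_add, ← pow_add, ← pow_add]; congr 1; ring
    have q3 : (2:ℚ)^(4*m+2) = 2^m * 2^m * 2^m * 2^m * 4 := by
      rw [pow_add, q2]; norm_num
    have q4 : (2:ℚ)^(m+1) = 2^m * 2 := by rw [pow_succ]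
    rw [q1, q2, q3, q4]
    set t := (2:ℚ)^m with ht
    have htne : t ≠ 0 := by rw [ht]; positivity
    field_simp
    ring
  · rw [eQ, eP]
    field_simp
end

section
/- Let A be a normal N×N complex matrix with eigenvalues λ₁,…,λ_N, and let m = (1/N) tr A. If ψ is a random unit vector uniformly distributed on the unit sphere of ℂ^N and X = ⟨ψ|A|ψ⟩, then E[X] = m and E[|X − m|²] = (1/(N(N+1))) Σ_{j=1}^N |λ_j − m|². -/
open Matrix MeasureTheory

/-- Borel measurable structure on complex matrices (entrywise). -/
noncomputable instance matrixMeasurableSpace (m n : Type*) :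
    MeasurableSpace (Matrix m n ℂ) :=
  inferInstanceAs (MeasurableSpace (m → n → ℂ))

namespace Stmt11
variable {N : ℕ}

lemma measurable_entry (i j : Fin N) : Measurable fun U : Matrix (Fin N) (Fin N) ℂ => U i j :=
  (measurable_pi_apply j).comp (measurable_pi_apply i)

lemma measurable_mulLeft (W : Matrix (Fin N) (Fin N) ℂ) :
    Measurable fun U : Matrix (Fin N) (Fin N) ℂ => W * U := by
  refine measurable_pi_lambda _ fun i => measurable_pi_lambda _ fun j => ?_
  simp only [Matrix.mul_apply]
  exact Finset.measurable_sum _ fun k _ => (measurable_entry k j).const_mul (W i k)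

lemma measurableSet_UG :
    MeasurableSet {U : Matrix (Fin N) (Fin N) ℂ | U ∈ Matrix.unitaryGroup (Fin N) ℂ} := by
  have h : {U : Matrix (Fin N) (Fin N) ℂ | U ∈ Matrix.unitaryGroup (Fin N) ℂ}
      = ⋂ i, ⋂ j, {U : Matrix (Fin N) (Fin N) ℂ |
          (U * star U) i j = (1 : Matrix (Fin N) (Fin N) ℂ) i j} := by
    ext U
    simp only [Set.mem_setOf_eq, Set.mem_iInter, Matrix.mem_unitaryGroup_iff]
    constructor
    · intro h i j; rw [h]
    · intro h; ext i j; exact h i j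
  rw [h]
  refine MeasurableSet.iInter fun i => MeasurableSet.iInter fun j => ?_
  have hm : Measurable fun U : Matrix (Fin N) (Fin N) ℂ => (U * star U) i j := by
    have h2 : (fun U : Matrix (Fin N) (Fin N) ℂ => (U * star U) i j)
        = fun U => ∑ k, U i k * star (U j k) := by
      funext U
      simp [Matrix.mul_apply, Matrix.star_apply]
    rw [h2]
    exact Finset.measurable_sum _ fun k _ =>
      (measurable_entry i k).mul
        ((Complex.continuous_conj.measurable).comp (measurable_entry j k))
  exact hm (measurableSet_singleton _)

variable (μ : Measure (Matrix (Fin N) (Fin N) ℂ)) [IsProbabilityMeasure μ]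

lemma ae_unitary (hsupp : μ {U | U ∈ Matrix.unitaryGroup (Fin N) ℂ} = 1) :
    ∀ᵐ U ∂μ, U ∈ Matrix.unitaryGroup (Fin N) ℂ := by
  have := (prob_compl_eq_zero_iff (μ := μ) measurableSet_UG).2 hsupp
  rw [ae_iff]
  exact this

lemma integral_inv {E : Type*} [NormedAddCommGroup E] [NormedSpace ℝ E]
    (hinv : ∀ W ∈ Matrix.unitaryGroup (Fin N) ℂ, Measure.map (fun U => W * U) μ = μ)
    {W : Matrix (Fin N) (Fin N) ℂ} (hW : W ∈ Matrix.unitaryGroup (Fin N) ℂ)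
    {f : Matrix (Fin N) (Fin N) ℂ → E} (hf : AEStronglyMeasurable f μ) :
    ∫ U, f (W * U) ∂μ = ∫ U, f U ∂μ := by
  have h := hinv W hW
  calc ∫ U, f (W * U) ∂μ
      = ∫ U, f U ∂(Measure.map (fun U => W * U) μ) :=
        (integral_map (measurable_mulLeft W).aemeasurable (by rw [h]; exact hf)).symm
    _ = ∫ U, f U ∂μ := by rw [h]

lemma col_sum {U : Matrix (Fin N) (Fin N) ℂ} (hU : U ∈ Matrix.unitaryGroup (Fin N) ℂ)
    (e0 : Fin N) : ∑ k, ‖U k e0‖ ^ 2 = 1 := by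
  have h := Matrix.mem_unitaryGroup_iff'.1 hU
  have h2 := congrArg (fun B : Matrix (Fin N) (Fin N) ℂ => B e0 e0) h
  simp only [Matrix.mul_apply, Matrix.star_apply, Matrix.one_apply_eq, RCLike.star_def] at h2
  have h3 : ((∑ k, ‖U k e0‖ ^ 2 : ℝ) : ℂ) = 1 := by
    push_cast
    rw [← h2]
    refine Finset.sum_congr rfl fun k _ => ?_
    rw [← Complex.normSq_eq_conj_mul_self]
    norm_cast
    simp [← Complex.sq_norm]
  exact_mod_cast h3

lemma row_sum {U : Matrix (Fin N) (Fin N) ℂ} (hU : U ∈ Matrix.unitaryGroup (Fin N) ℂ)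
    (i : Fin N) : ∑ k, ‖U i k‖ ^ 2 = 1 := by
  have h := Matrix.mem_unitaryGroup_iff.1 hU
  have h2 := congrArg (fun B : Matrix (Fin N) (Fin N) ℂ => B i i) h
  simp only [Matrix.mul_apply, Matrix.star_apply, Matrix.one_apply_eq, RCLike.star_def] at h2
  have h3 : ((∑ k, ‖U i k‖ ^ 2 : ℝ) : ℂ) = 1 := by
    push_cast
    rw [← h2]
    refine Finset.sum_congr rfl fun k _ => ?_
    rw [Complex.mul_conj]
    norm_cast
    simp [← Complex.sq_norm]
  exact_mod_cast h3

lemma entry_le_one {U : Matrix (Fin N) (Fin N) ℂ} (hU : U ∈ Matrix.unitaryGroup (Fin N) ℂ)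
    (i j : Fin N) : ‖U i j‖ ≤ 1 := by
  have h := row_sum hU i
  have h2 : ‖U i j‖ ^ 2 ≤ 1 := by
    rw [← h]
    exact Finset.single_le_sum (f := fun k => ‖U i k‖ ^ 2) (fun k _ => sq_nonneg _)
      (Finset.mem_univ j)
  exact (pow_le_one_iff_of_nonneg (norm_nonneg _) two_ne_zero).1 h2





def permM (σ : Equiv.Perm (Fin N)) : Matrix (Fin N) (Fin N) ℂ :=
  Matrix.of fun i j => if σ i = j then 1 else 0

lemma permM_mul (σ : Equiv.Perm (Fin N)) (U : Matrix (Fin N) (Fin N) ℂ) (i j : Fin N) :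
    (permM σ * U) i j = U (σ i) j := by
  simp [permM, Matrix.mul_apply, Finset.sum_ite_eq]

lemma permM_mem (σ : Equiv.Perm (Fin N)) : permM σ ∈ Matrix.unitaryGroup (Fin N) ℂ := by
  rw [Matrix.mem_unitaryGroup_iff]
  ext i j
  simp only [Matrix.mul_apply, Matrix.star_apply, permM, Matrix.of_apply, Matrix.one_apply]
  have h : ∀ k : Fin N, (if σ i = k then (1:ℂ) else 0) * star (if σ j = k then (1:ℂ) else 0)
      = if σ i = k then (if σ j = k then 1 else 0) else 0 := by
    intro k; split <;> split <;> simp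
  rw [Finset.sum_congr rfl fun k _ => h k, Finset.sum_ite_eq]
  simp [EquivLike.apply_eq_iff_eq, eq_comm]

def phaseM (i0 : Fin N) : Matrix (Fin N) (Fin N) ℂ :=
  Matrix.diagonal (fun k => if k = i0 then Complex.I else 1)

lemma phaseM_mem (i0 : Fin N) : phaseM i0 ∈ Matrix.unitaryGroup (Fin N) ℂ := by
  rw [Matrix.mem_unitaryGroup_iff, phaseM, Matrix.star_eq_conjTranspose,
    Matrix.diagonal_conjTranspose, Matrix.diagonal_mul_diagonal]
  convert Matrix.diagonal_one with k
  split <;> simp_all [Complex.conj_I, Complex.I_mul_I]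

lemma phaseM_mul (i0 : Fin N) (U : Matrix (Fin N) (Fin N) ℂ) (i j : Fin N) :
    (phaseM i0 * U) i j = (if i = i0 then Complex.I else 1) * U i j := by
  simp [phaseM, Matrix.diagonal_mul]





noncomputable def rr : ℂ := ((Real.sqrt 2)⁻¹ : ℝ)

lemma rr_conj : (starRingEnd ℂ) rr = rr := by simp [rr]

lemma rr_sq : rr * rr = 1/2 := by
  have h : (Real.sqrt 2)⁻¹ * (Real.sqrt 2)⁻¹ = 1/2 := by
    rw [← mul_inv, Real.mul_self_sqrt] <;> norm_num
  rw [rr, ← Complex.ofReal_mul, h]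
  norm_num

lemma sum_two {α : Type*} [AddCommMonoid α] {i0 i1 : Fin N} (h : i0 ≠ i1) (f : Fin N → α)
    (hf : ∀ k, k ≠ i0 → k ≠ i1 → f k = 0) : ∑ k, f k = f i0 + f i1 := by
  rw [← Finset.sum_pair h]
  refine (Finset.sum_subset (Finset.subset_univ ({i0, i1} : Finset (Fin N))) ?_).symm
  intro k _ hk
  simp only [Finset.mem_insert, Finset.mem_singleton] at hk
  push_neg at hk
  exact hf k hk.1 hk.2

noncomputable def rotM (i0 i1 : Fin N) : Matrix (Fin N) (Fin N) ℂ :=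
  Matrix.of fun i j =>
    if i = i0 then (if j = i0 then rr else if j = i1 then rr else 0)
    else if i = i1 then (if j = i0 then -rr else if j = i1 then rr else 0)
    else if i = j then 1 else 0

lemma rotM_mem {i0 i1 : Fin N} (h : i0 ≠ i1) :
    rotM i0 i1 ∈ Matrix.unitaryGroup (Fin N) ℂ := by
  rw [Matrix.mem_unitaryGroup_iff]
  ext i j
  simp only [Matrix.mul_apply, Matrix.star_apply, rotM, Matrix.of_apply, Matrix.one_apply]
  by_cases hi0 : i = i0
  · subst hi0
    rw [sum_two h _ (fun k hk0 hk1 => by simp [hk0, hk1, Ne.symm hk0])]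
    by_cases hj0 : j = i
    · subst hj0
      simp [h, rr_conj, rr_sq]
      norm_num
    · by_cases hj1 : j = i1
      · subst hj1
        simp [h, h.symm, Ne.symm hj0, rr_conj, rr_sq, hj0]
      · simp [h, hj0, hj1, Ne.symm hj0, fun hh : j = i => hj0 hh]
  · by_cases hi1 : i = i1
    · subst hi1
      rw [sum_two h _ (fun k hk0 hk1 => by simp [hk0, hk1, Ne.symm hk1])]
      by_cases hj0 : j = i0
      · subst hj0
        simp [h, Ne.symm h, rr_conj, rr_sq, fun hh : i = j => h (hh ▸ rfl)]
      · by_cases hj1 : j = i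
        · subst hj1
          simp [h, Ne.symm h, rr_conj, rr_sq]
          norm_num
        · simp [h, Ne.symm h, hj0, hj1, Ne.symm hj1]
          try simp_all
    · have hs : ∑ k, (if i = i0 then (if k = i0 then rr else if k = i1 then rr else 0)
          else if i = i1 then (if k = i0 then -rr else if k = i1 then rr else 0)
          else if i = k then 1 else 0) *
            star (if j = i0 then (if k = i0 then rr else if k = i1 then rr else 0)
          else if j = i1 then (if k = i0 then -rr else if k = i1 then rr else 0)
          else if j = k then 1 else 0)
          = star (if j = i0 then (if i = i0 then rr else if i = i1 then rr else 0)
          else if j = i1 then (if i = i0 then -rr else if i = i1 then rr else 0)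
          else if j = i then 1 else 0) := by
        rw [Finset.sum_eq_single i]
        · simp [hi0, hi1]
        · intro k _ hk
          simp [hi0, hi1, Ne.symm hk]
        · simp
      rw [hs]
      by_cases hj0 : j = i0
      · simp [hj0, hi0, hi1, fun hh : i0 = i => hi0 hh.symm]
        try (intro hh; exact absurd hh.symm hi1)
      · by_cases hj1 : j = i1
        · simp [hj0, hj1, hi0, hi1]
        · by_cases hji : j = i
          · simp [hj0, hj1, hji, hi0, hi1]
          · simp [hj0, hj1, hji, Ne.symm hji, fun hh : i = j => hji hh.symm]

lemma rotM_mul_row0 {i0 i1 : Fin N} (h : i0 ≠ i1) (U : Matrix (Fin N) (Fin N) ℂ) (j : Fin N) :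
    (rotM i0 i1 * U) i0 j = rr * (U i0 j + U i1 j) := by
  simp only [Matrix.mul_apply, rotM, Matrix.of_apply, if_pos rfl]
  rw [sum_two h _ (fun k hk0 hk1 => by simp [hk0, hk1])]
  simp [h, Ne.symm h]
  ring

lemma rotM_mul_row1 {i0 i1 : Fin N} (h : i0 ≠ i1) (U : Matrix (Fin N) (Fin N) ℂ) (j : Fin N) :
    (rotM i0 i1 * U) i1 j = rr * (U i1 j - U i0 j) := by
  simp only [Matrix.mul_apply, rotM, Matrix.of_apply]
  rw [sum_two h _ (fun k hk0 hk1 => by simp [hk0, hk1, Ne.symm hk1])]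
  simp [h, Ne.symm h]
  ring



end Stmt11

open Stmt11 in
/-- Let `A = V diag(λ) V†` be a normal `N × N` complex matrix and
`m = tr A / N`.  For `ψ` a uniformly random unit vector of `ℂ^N` (realized as
the first column of a Haar-random unitary `U`) and `X = ⟨ψ|A|ψ⟩`, one has
`E[X] = m` and `E[|X - m|²] = (1/(N(N+1))) ∑_j |λ_j - m|²`. -/
theorem stmt_11 (N : ℕ) (hN : 0 < N)
    (μ : Measure (Matrix (Fin N) (Fin N) ℂ)) [IsProbabilityMeasure μ]
    (hsupp : μ {U | U ∈ Matrix.unitaryGroup (Fin N) ℂ} = 1)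
    (hinv : ∀ W ∈ Matrix.unitaryGroup (Fin N) ℂ,
      Measure.map (fun U => W * U) μ = μ)
    (A V : Matrix (Fin N) (Fin N) ℂ) (lam : Fin N → ℂ)
    (hV : V ∈ Matrix.unitaryGroup (Fin N) ℂ)
    (hA : A = V * Matrix.diagonal lam * Vᴴ) :
    let m : ℂ := A.trace / N
    let ψ : Matrix (Fin N) (Fin N) ℂ → (Fin N → ℂ) := fun U i => U i ⟨0, hN⟩
    let X : Matrix (Fin N) (Fin N) ℂ → ℂ := fun U => star (ψ U) ⬝ᵥ A.mulVec (ψ U)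
    (∫ U, X U ∂μ = m) ∧
    (∫ U, ‖X U - m‖ ^ 2 ∂μ) = (1 / (N * (N + 1)) : ℝ) * ∑ j, ‖lam j - m‖ ^ 2 := by
  intro m ψ X
  classical
  have hNC : (N : ℂ) ≠ 0 := Nat.cast_ne_zero.2 hN.ne'
  have hNR : (N : ℝ) ≠ 0 := Nat.cast_ne_zero.2 hN.ne'
  set e0 : Fin N := ⟨0, hN⟩ with he0
  have hae := Stmt11.ae_unitary μ hsupp
  have htr : A.trace = ∑ j, lam j := by
    rw [hA, Matrix.trace_mul_cycle, ← Matrix.star_eq_conjTranspose,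
      Matrix.mem_unitaryGroup_iff'.1 hV, one_mul, Matrix.trace_diagonal]
  have hm : m = (∑ j, lam j) / N := by
    show A.trace / N = _
    rw [htr]
  -- the squared moduli of the first column
  set q : Fin N → Matrix (Fin N) (Fin N) ℂ → ℝ := fun j U => ‖U j e0‖ ^ 2 with hqdef
  have hqmeas : ∀ j, Measurable (q j) := fun j =>
    (Stmt11.measurable_entry j e0).norm.pow_const 2
  have hqnn : ∀ j U, 0 ≤ q j U := fun j U => sq_nonneg _
  have hqle : ∀ j, ∀ᵐ U ∂μ, q j U ≤ 1 := fun j => hae.mono fun U hU => by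
    have h1 := Stmt11.entry_le_one hU j e0
    calc q j U = ‖U j e0‖ ^ 2 := rfl
      _ ≤ 1 ^ 2 := by gcongr
      _ = 1 := one_pow 2
  have hqsum : ∀ᵐ U ∂μ, ∑ j, q j U = 1 := hae.mono fun U hU => Stmt11.col_sum hU e0
  have Iq : ∀ j, Integrable (q j) μ := fun j =>
    (integrable_const (1:ℝ)).mono' (hqmeas j).aestronglyMeasurable
      ((hqle j).mono fun U h => by
        rw [Real.norm_eq_abs, abs_of_nonneg (hqnn j U)]; exact h)
  have Iqq : ∀ j k, Integrable (fun U => q j U * q k U) μ := fun j k =>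
    (integrable_const (1:ℝ)).mono' ((hqmeas j).mul (hqmeas k)).aestronglyMeasurable
      (((hqle j).and (hqle k)).mono fun U h => by
        rw [Real.norm_eq_abs, abs_of_nonneg (mul_nonneg (hqnn j U) (hqnn k U))]
        exact mul_le_one₀ h.1 (hqnn k U) h.2)
  -- permutation invariance of moments
  have hperm1 : ∀ (σ : Equiv.Perm (Fin N)) j,
      ∫ U, q (σ j) U ∂μ = ∫ U, q j U ∂μ := by
    intro σ j
    have h := Stmt11.integral_inv μ hinv (Stmt11.permM_mem σ)
      (f := q j) (hqmeas j).aestronglyMeasurable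
    calc ∫ U, q (σ j) U ∂μ
        = ∫ U, q j (Stmt11.permM σ * U) ∂μ := by
          refine integral_congr_ae (Filter.Eventually.of_forall fun U => ?_)
          simp [hqdef, Stmt11.permM_mul]
      _ = _ := h
  have hperm2 : ∀ (σ : Equiv.Perm (Fin N)) j k,
      ∫ U, q (σ j) U * q (σ k) U ∂μ = ∫ U, q j U * q k U ∂μ := by
    intro σ j k
    have h := Stmt11.integral_inv μ hinv (Stmt11.permM_mem σ)
      (f := fun U => q j U * q k U) ((hqmeas j).mul (hqmeas k)).aestronglyMeasurable
    calc ∫ U, q (σ j) U * q (σ k) U ∂μ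
        = ∫ U, q j (Stmt11.permM σ * U) * q k (Stmt11.permM σ * U) ∂μ := by
          refine integral_congr_ae (Filter.Eventually.of_forall fun U => ?_)
          simp [hqdef, Stmt11.permM_mul]
      _ = _ := h
  -- first moments
  have hq1 : ∀ j, ∫ U, q j U ∂μ = 1 / N := by
    have hall : ∀ j, ∫ U, q j U ∂μ = ∫ U, q e0 U ∂μ := by
      intro j
      have h := hperm1 (Equiv.swap e0 j) e0
      simpa [Equiv.swap_apply_left] using h
    have hsum1 : ∑ j, ∫ U, q j U ∂μ = 1 := by
      rw [← integral_finset_sum _ fun j _ => Iq j, integral_congr_ae hqsum]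
      simp
    have hNsum : (N : ℝ) * ∫ U, q e0 U ∂μ = 1 := by
      rw [← hsum1, Finset.sum_congr rfl fun j _ => hall j, Finset.sum_const,
        Finset.card_univ, Fintype.card_fin, nsmul_eq_mul]
    intro j
    rw [hall j]
    field_simp
    linarith [hNsum]
  -- diagonalized quadratic form
  set Y : Matrix (Fin N) (Fin N) ℂ → ℂ := fun U => ∑ j, lam j * ((q j U : ℝ) : ℂ)
    with hYdef
  have hYmeas : Measurable Y := Finset.measurable_sum _ fun j _ =>
    ((Complex.measurable_ofReal.comp (hqmeas j)).const_mul _)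
  have hψ : ∀ U, ψ (Vᴴ * U) = Vᴴ *ᵥ (ψ U) := by
    intro U
    funext i
    simp [ψ, Matrix.mulVec, Matrix.mul_apply, dotProduct]
  have hzsq : ∀ z : ℂ, star z * z = ((‖z‖ ^ 2 : ℝ) : ℂ) := by
    intro z
    rw [show (star z) * z = z * (starRingEnd ℂ) z from mul_comm _ _, Complex.mul_conj]
    norm_cast
    simp [← Complex.sq_norm]
  have hYspec : ∀ U, Y U = star (ψ U) ⬝ᵥ ((Matrix.diagonal lam) *ᵥ (ψ U)) := by
    intro U
    simp only [hYdef, dotProduct, Pi.star_apply, Matrix.mulVec_diagonal]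
    refine Finset.sum_congr rfl fun j _ => ?_
    have h2 : star (ψ U j) * (lam j * ψ U j) = lam j * (star (ψ U j) * ψ U j) := by ring
    rw [h2, hzsq]
  have hXY : ∀ U, X U = Y (Vᴴ * U) := by
    intro U
    show star (ψ U) ⬝ᵥ A *ᵥ ψ U = Y (Vᴴ * U)
    rw [hYspec, hψ, Matrix.star_mulVec, Matrix.conjTranspose_conjTranspose,
      ← Matrix.dotProduct_mulVec, Matrix.mulVec_mulVec, Matrix.mulVec_mulVec,
      hA, mul_assoc]
  have hVH : Vᴴ ∈ Matrix.unitaryGroup (Fin N) ℂ := by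
    rw [← Matrix.star_eq_conjTranspose]
    exact Unitary.star_mem hV
  -- part 1
  have part1 : ∫ U, X U ∂μ = m := by
    calc ∫ U, X U ∂μ = ∫ U, Y (Vᴴ * U) ∂μ :=
          integral_congr_ae (Filter.Eventually.of_forall fun U => hXY U)
      _ = ∫ U, Y U ∂μ := Stmt11.integral_inv μ hinv hVH hYmeas.aestronglyMeasurable
      _ = m := by
          show (∫ U, ∑ j, lam j * ((q j U : ℝ) : ℂ) ∂μ) = m
          rw [integral_finset_sum (f := fun (j : Fin N) U => lam j * ((q j U : ℝ) : ℂ))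
            Finset.univ (fun j _ => ((Iq j).ofReal.const_mul (lam j)))]
          have h3 : ∀ j : Fin N, ∫ U, lam j * ((q j U : ℝ) : ℂ) ∂μ
              = lam j * ((1 / N : ℝ) : ℂ) := by
            intro j
            rw [integral_const_mul]
            have h4 : ∫ U, ((q j U : ℝ) : ℂ) ∂μ = ((1 / N : ℝ) : ℂ) := by
              rw [← hq1 j]; exact integral_ofReal
            rw [h4]
          rw [Finset.sum_congr rfl fun j _ => h3 j, ← Finset.sum_mul, hm]
          push_cast
          ring
  refine ⟨part1, ?_⟩
  -- ===== part 2 =====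
  set c : Fin N → ℂ := fun j => lam j - m with hcdef
  have hcsum : ∑ j, c j = 0 := by
    simp only [hcdef]
    rw [Finset.sum_sub_distrib, Finset.sum_const, Finset.card_univ, Fintype.card_fin,
      nsmul_eq_mul, hm]
    field_simp
    ring
  set Z : Matrix (Fin N) (Fin N) ℂ → ℂ := fun U => ∑ j, c j * ((q j U : ℝ) : ℂ) with hZdef
  have hYm : ∀ᵐ U ∂μ, ‖Y U - m‖ ^ 2 = ‖Z U‖ ^ 2 := hqsum.mono (fun U h => by
    have hz : Y U - m = Z U := by
      show (∑ j, lam j * ((q j U : ℝ) : ℂ)) - m = ∑ j, (lam j - m) * ((q j U : ℝ) : ℂ)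
      have h5 : ∑ j, (lam j - m) * ((q j U : ℝ) : ℂ)
          = (∑ j, lam j * ((q j U : ℝ) : ℂ)) - m * ∑ j, ((q j U : ℝ) : ℂ) := by
        rw [Finset.mul_sum, ← Finset.sum_sub_distrib]
        exact Finset.sum_congr rfl fun j _ => by ring
      rw [h5, ← Complex.ofReal_sum, h]
      simp
    rw [hz])
  have hint2 : ∫ U, ‖X U - m‖ ^ 2 ∂μ = ∫ U, ‖Z U‖ ^ 2 ∂μ := by
    have hf : Measurable fun U => ‖Y U - m‖ ^ 2 :=
      ((hYmeas.sub measurable_const).norm.pow_const 2)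
    calc ∫ U, ‖X U - m‖ ^ 2 ∂μ
        = ∫ U, ‖Y (Vᴴ * U) - m‖ ^ 2 ∂μ := by
          refine integral_congr_ae (Filter.Eventually.of_forall fun U => ?_)
          exact congrArg (fun z : ℂ => ‖z - m‖ ^ 2) (hXY U)
      _ = ∫ U, ‖Y U - m‖ ^ 2 ∂μ :=
          Stmt11.integral_inv μ hinv hVH hf.aestronglyMeasurable
      _ = ∫ U, ‖Z U‖ ^ 2 ∂μ := integral_congr_ae hYm
  have hcast : ((∫ U, ‖Z U‖ ^ 2 ∂μ : ℝ) : ℂ)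
      = ∑ j, ∑ k, (c j * star (c k)) * ((∫ U, q j U * q k U ∂μ : ℝ) : ℂ) := by
    have hp : ∀ U, ((‖Z U‖ ^ 2 : ℝ) : ℂ)
        = ∑ j, ∑ k, (c j * star (c k)) * ((q j U * q k U : ℝ) : ℂ) := by
      intro U
      calc ((‖Z U‖ ^ 2 : ℝ) : ℂ) = star (Z U) * Z U := (hzsq _).symm
        _ = (∑ k, star (c k) * ((q k U : ℝ) : ℂ)) * (∑ j, c j * ((q j U : ℝ) : ℂ)) := by
            congr 1
            show star (∑ k, c k * ((q k U : ℝ) : ℂ)) = _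
            rw [star_sum]
            refine Finset.sum_congr rfl fun k _ => ?_
            simp [star_mul', Complex.star_def, Complex.conj_ofReal]
        _ = ∑ j, ∑ k, (c j * star (c k)) * ((q j U * q k U : ℝ) : ℂ) := by
            rw [Finset.sum_mul_sum, Finset.sum_comm]
            refine Finset.sum_congr rfl fun j _ => Finset.sum_congr rfl fun k _ => ?_
            push_cast
            ring
    calc ((∫ U, ‖Z U‖ ^ 2 ∂μ : ℝ) : ℂ) = ∫ U, ((‖Z U‖ ^ 2 : ℝ) : ℂ) ∂μ :=
          integral_ofReal.symm
      _ = ∫ U, ∑ j, ∑ k, (c j * star (c k)) * ((q j U * q k U : ℝ) : ℂ) ∂μ :=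
          integral_congr_ae (Filter.Eventually.of_forall hp)
      _ = ∑ j, ∑ k, (c j * star (c k)) * ((∫ U, q j U * q k U ∂μ : ℝ) : ℂ) := by
          rw [integral_finset_sum
            (f := fun (j : Fin N) U => ∑ k, (c j * star (c k)) * ((q j U * q k U : ℝ) : ℂ))
            Finset.univ
            (fun j _ => integrable_finset_sum _ fun k _ => ((Iqq j k).ofReal.const_mul _))]
          refine Finset.sum_congr rfl fun j _ => ?_
          rw [integral_finset_sum
            (f := fun (k : Fin N) U => (c j * star (c k)) * ((q j U * q k U : ℝ) : ℂ))
            Finset.univ (fun k _ => ((Iqq j k).ofReal.const_mul _))]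
          refine Finset.sum_congr rfl fun k _ => ?_
          rw [integral_const_mul]
          congr 1
          exact integral_ofReal
  have hcnorm : ∀ j, c j * star (c j) = ((‖c j‖ ^ 2 : ℝ) : ℂ) := by
    intro j
    rw [mul_comm, hzsq]
  rcases Nat.lt_or_ge N 2 with hN2 | hN2
  · -- N = 1
    have hNe : N = 1 := by omega
    have hc0 : ∀ j, c j = 0 := by
      intro j
      have hall : ∀ k : Fin N, k = j := by
        intro k
        have h1 := k.isLt
        have h2 := j.isLt
        apply Fin.ext
        omega
      have hs2 : ∑ k, c k = ∑ _k : Fin N, c j :=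
        Finset.sum_congr rfl fun k _ => by rw [hall k]
      have hs3 : (∑ _k : Fin N, c j) = c j := by
        rw [Finset.sum_const, Finset.card_univ, Fintype.card_fin, hNe, one_smul]
      calc c j = ∑ _k : Fin N, c j := hs3.symm
        _ = ∑ k, c k := hs2.symm
        _ = 0 := hcsum
    have hzero : ((∫ U, ‖Z U‖ ^ 2 ∂μ : ℝ) : ℂ) = 0 := by
      rw [hcast]
      refine Finset.sum_eq_zero fun j _ => Finset.sum_eq_zero fun k _ => ?_
      rw [hc0 j]
      ring
    have hzero' : ∫ U, ‖Z U‖ ^ 2 ∂μ = 0 := by exact_mod_cast hzero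
    rw [hint2, hzero']
    have : ∑ j, ‖lam j - m‖ ^ 2 = 0 := by
      refine Finset.sum_eq_zero fun j _ => ?_
      have := hc0 j
      simp only [hcdef] at this
      rw [this]
      simp
    rw [this, mul_zero]
  · -- N ≥ 2
    set i1 : Fin N := ⟨1, hN2⟩ with hi1
    have h01 : e0 ≠ i1 := by
      simp [he0, hi1, Fin.ext_iff]
    set a : ℝ := ∫ U, q e0 U * q e0 U ∂μ with hadef
    set b : ℝ := ∫ U, q e0 U * q i1 U ∂μ with hbdef
    have hMjj : ∀ j, ∫ U, q j U * q j U ∂μ = a := by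
      intro j
      have h := hperm2 (Equiv.swap e0 j) e0 e0
      simpa [Equiv.swap_apply_left] using h
    have hMjk : ∀ j k, j ≠ k → ∫ U, q j U * q k U ∂μ = b := by
      intro j k hjk
      set τ := Equiv.swap e0 j with hτ
      have hne : τ.symm k ≠ e0 := by
        intro h
        apply hjk
        have h2 := congrArg τ h
        rw [Equiv.apply_symm_apply] at h2
        rw [h2, hτ, Equiv.swap_apply_left]
      set ρ := Equiv.swap i1 (τ.symm k) with hρ
      have hσ0 : τ (ρ e0) = j := by
        rw [hρ, Equiv.swap_apply_of_ne_of_ne h01 (Ne.symm hne), hτ, Equiv.swap_apply_left]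
      have hσ1 : τ (ρ i1) = k := by
        rw [hρ, Equiv.swap_apply_left, Equiv.apply_symm_apply]
      have h := hperm2 (ρ.trans τ) e0 i1
      simp only [Equiv.trans_apply, hσ0, hσ1] at h
      exact h
    have hrel1 : (N : ℝ) * ((N : ℝ) * b + (a - b)) = 1 := by
      have he2 : ∀ᵐ U ∂μ, (∑ j, q j U) * (∑ k, q k U) = 1 :=
        hqsum.mono fun U h => by rw [h, one_mul]
      have hIsq : ∫ U, (∑ j, q j U) * (∑ k, q k U) ∂μ = 1 := by
        rw [integral_congr_ae he2]
        simp
      have hexp : ∫ U, (∑ j, q j U) * (∑ k, q k U) ∂μ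
          = ∑ j, ∑ k, ∫ U, q j U * q k U ∂μ := by
        have hpt : ∀ U, (∑ j, q j U) * (∑ k, q k U) = ∑ j, ∑ k, q j U * q k U := fun U =>
          Finset.sum_mul_sum _ _ _ _
        rw [integral_congr_ae (Filter.Eventually.of_forall hpt),
          integral_finset_sum (f := fun (j : Fin N) U => ∑ k, q j U * q k U) Finset.univ
            (fun j _ => integrable_finset_sum _ fun k _ => Iqq j k)]
        exact Finset.sum_congr rfl fun j _ =>
          integral_finset_sum Finset.univ (fun k _ => Iqq j k)
      have hval : ∀ j : Fin N, ∑ k, ∫ U, q j U * q k U ∂μ = (N : ℝ) * b + (a - b) := by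
        intro j
        have hterm : ∀ k, ∫ U, q j U * q k U ∂μ = b + (if j = k then a - b else 0) := by
          intro k
          by_cases h : j = k
          · subst h
            rw [hMjj j]
            simp
          · rw [hMjk j k h]
            simp [h]
        rw [Finset.sum_congr rfl fun k _ => hterm k, Finset.sum_add_distrib,
          Finset.sum_const, Finset.card_univ, Fintype.card_fin, nsmul_eq_mul,
          Finset.sum_ite_eq]
        simp
      rw [hexp, Finset.sum_congr rfl fun j _ => hval j, Finset.sum_const,
        Finset.card_univ, Fintype.card_fin, nsmul_eq_mul] at hIsq
      exact hIsq
    -- phase invariance : E[Re²] = E[Im²]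
    set w : Matrix (Fin N) (Fin N) ℂ → ℂ :=
      fun U => U e0 e0 * (starRingEnd ℂ) (U i1 e0) with hwdef
    have hwmeas : Measurable w :=
      (Stmt11.measurable_entry e0 e0).mul
        ((Complex.continuous_conj.measurable).comp (Stmt11.measurable_entry i1 e0))
    have hwle : ∀ᵐ U ∂μ, ‖w U‖ ≤ 1 := hae.mono fun U hU => by
      show ‖U e0 e0 * (starRingEnd ℂ) (U i1 e0)‖ ≤ 1
      rw [norm_mul, Complex.norm_conj]
      calc ‖U e0 e0‖ * ‖U i1 e0‖ ≤ 1 * 1 := by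
            gcongr
            · exact Stmt11.entry_le_one hU e0 e0
            · exact Stmt11.entry_le_one hU i1 e0
        _ = 1 := one_mul 1
    have hIre : Integrable (fun U => ((w U).re) ^ 2) μ :=
      (integrable_const (1:ℝ)).mono'
        ((Complex.measurable_re.comp hwmeas).pow_const 2).aestronglyMeasurable
        (hwle.mono fun U h => by
          rw [Real.norm_eq_abs, abs_of_nonneg (sq_nonneg _)]
          nlinarith [sq_abs ((w U).re), Complex.abs_re_le_norm (w U),
            abs_nonneg ((w U).re), norm_nonneg (w U)])
    have hIim : Integrable (fun U => ((w U).im) ^ 2) μ :=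
      (integrable_const (1:ℝ)).mono'
        ((Complex.measurable_im.comp hwmeas).pow_const 2).aestronglyMeasurable
        (hwle.mono fun U h => by
          rw [Real.norm_eq_abs, abs_of_nonneg (sq_nonneg _)]
          nlinarith [sq_abs ((w U).im), Complex.abs_im_le_norm (w U),
            abs_nonneg ((w U).im), norm_nonneg (w U)])
    have hphase : ∫ U, ((w U).im) ^ 2 ∂μ = ∫ U, ((w U).re) ^ 2 ∂μ := by
      have h := Stmt11.integral_inv μ hinv (Stmt11.phaseM_mem e0)
        (f := fun U => ((w U).re) ^ 2)
        ((Complex.measurable_re.comp hwmeas).pow_const 2).aestronglyMeasurable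
      calc ∫ U, ((w U).im) ^ 2 ∂μ
          = ∫ U, ((w (Stmt11.phaseM e0 * U)).re) ^ 2 ∂μ := by
            refine integral_congr_ae (Filter.Eventually.of_forall fun U => ?_)
            show ((w U).im) ^ 2 = ((w (Stmt11.phaseM e0 * U)).re) ^ 2
            have h1 : w (Stmt11.phaseM e0 * U) = Complex.I * w U := by
              show (Stmt11.phaseM e0 * U) e0 e0 *
                  (starRingEnd ℂ) ((Stmt11.phaseM e0 * U) i1 e0)
                  = Complex.I * (U e0 e0 * (starRingEnd ℂ) (U i1 e0))
              rw [Stmt11.phaseM_mul, Stmt11.phaseM_mul, if_pos rfl,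
                if_neg (Ne.symm h01), one_mul]
              ring
            have h2 : ((w (Stmt11.phaseM e0 * U)).re) ^ 2 = ((w U).im) ^ 2 := by
              rw [h1]
              have h3 : (Complex.I * w U).re = -((w U).im) := by simp
              rw [h3]
              ring
            exact h2.symm
      _ = ∫ U, ((w U).re) ^ 2 ∂μ := h
    have hns : ∀ z : ℂ, ‖z‖ ^ 2 = Complex.normSq z := fun z => by
      rw [Complex.sq_norm]
    have hRIb : ∫ U, ((w U).re) ^ 2 ∂μ + ∫ U, ((w U).im) ^ 2 ∂μ = b := by
      have hpt : ∀ U : Matrix (Fin N) (Fin N) ℂ,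
          q e0 U * q i1 U = ((w U).re) ^ 2 + ((w U).im) ^ 2 := by
        intro U
        have h1 : q e0 U * q i1 U = Complex.normSq (w U) := by
          show ‖U e0 e0‖ ^ 2 * ‖U i1 e0‖ ^ 2
              = Complex.normSq (U e0 e0 * (starRingEnd ℂ) (U i1 e0))
          rw [Complex.normSq_mul, Complex.normSq_conj, hns, hns]
        rw [h1, Complex.normSq_apply]
        ring
      rw [← integral_add hIre hIim, hbdef]
      exact (integral_congr_ae (Filter.Eventually.of_forall hpt)).symm
    have hre2 : ∫ U, ((w U).re) ^ 2 ∂μ = b / 2 := by linarith [hphase, hRIb]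
    have hrrns : Complex.normSq Stmt11.rr = 1/2 := by
      rw [Stmt11.rr, Complex.normSq_ofReal, ← mul_inv, Real.mul_self_sqrt] <;> norm_num
    have hrot : b = (1/4) * (a + b + (b + a)) - b / 2 := by
      have hfmeas : Measurable fun U => q e0 U * q i1 U := (hqmeas e0).mul (hqmeas i1)
      have h := Stmt11.integral_inv μ hinv (Stmt11.rotM_mem h01)
        (f := fun U => q e0 U * q i1 U) hfmeas.aestronglyMeasurable
      have hpt : ∀ U : Matrix (Fin N) (Fin N) ℂ,
          q e0 (Stmt11.rotM e0 i1 * U) * q i1 (Stmt11.rotM e0 i1 * U)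
          = (1/4) * ((q e0 U + q i1 U) * (q e0 U + q i1 U)) - ((w U).re) ^ 2 := by
        intro U
        have hu0 : (Stmt11.rotM e0 i1 * U) e0 e0 = Stmt11.rr * (U e0 e0 + U i1 e0) :=
          Stmt11.rotM_mul_row0 h01 U e0
        have hu1 : (Stmt11.rotM e0 i1 * U) i1 e0 = Stmt11.rr * (U i1 e0 - U e0 e0) :=
          Stmt11.rotM_mul_row1 h01 U e0
        show ‖(Stmt11.rotM e0 i1 * U) e0 e0‖ ^ 2 * ‖(Stmt11.rotM e0 i1 * U) i1 e0‖ ^ 2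
            = (1/4) * ((‖U e0 e0‖ ^ 2 + ‖U i1 e0‖ ^ 2) * (‖U e0 e0‖ ^ 2 + ‖U i1 e0‖ ^ 2))
              - ((U e0 e0 * (starRingEnd ℂ) (U i1 e0)).re) ^ 2
        rw [hu0, hu1]
        simp only [hns]
        rw [Complex.normSq_mul, Complex.normSq_mul, hrrns, Complex.normSq_add,
          Complex.normSq_sub]
        have hts : (U i1 e0 * (starRingEnd ℂ) (U e0 e0)).re
            = (U e0 e0 * (starRingEnd ℂ) (U i1 e0)).re := by
          rw [show U i1 e0 * (starRingEnd ℂ) (U e0 e0)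
              = (starRingEnd ℂ) (U e0 e0 * (starRingEnd ℂ) (U i1 e0)) by
            rw [_root_.map_mul, Complex.conj_conj]
            ring, Complex.conj_re]
        rw [hts]
        ring
      have hIS2 : Integrable (fun U => (q e0 U + q i1 U) * (q e0 U + q i1 U)) μ := by
        have heq : (fun U => (q e0 U + q i1 U) * (q e0 U + q i1 U))
            = fun U => q e0 U * q e0 U + q e0 U * q i1 U
              + (q i1 U * q e0 U + q i1 U * q i1 U) := by
          funext U
          ring
        rw [heq]
        exact ((Iqq e0 e0).add (Iqq e0 i1)).add ((Iqq i1 e0).add (Iqq i1 i1))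
      have hS2v : ∫ U, (q e0 U + q i1 U) * (q e0 U + q i1 U) ∂μ = a + b + (b + a) := by
        calc ∫ U, (q e0 U + q i1 U) * (q e0 U + q i1 U) ∂μ
            = ∫ U, (q e0 U * q e0 U + q e0 U * q i1 U)
                + (q i1 U * q e0 U + q i1 U * q i1 U) ∂μ := by
              refine integral_congr_ae (Filter.Eventually.of_forall fun U => by ring)
          _ = a + b + (b + a) := by
              have I1 : Integrable (fun U => q e0 U * q e0 U + q e0 U * q i1 U) μ :=
                (Iqq e0 e0).add (Iqq e0 i1)
              have I2 : Integrable (fun U => q i1 U * q e0 U + q i1 U * q i1 U) μ :=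
                (Iqq i1 e0).add (Iqq i1 i1)
              rw [integral_add I1 I2, integral_add (Iqq e0 e0) (Iqq e0 i1),
                integral_add (Iqq i1 e0) (Iqq i1 i1),
                hMjj i1, hMjk i1 e0 (Ne.symm h01), ← hadef, ← hbdef]
      calc b = ∫ U, q e0 (Stmt11.rotM e0 i1 * U) * q i1 (Stmt11.rotM e0 i1 * U) ∂μ := by
            rw [h, hbdef]
        _ = ∫ U, (1/4) * ((q e0 U + q i1 U) * (q e0 U + q i1 U)) - ((w U).re) ^ 2 ∂μ :=
            integral_congr_ae (Filter.Eventually.of_forall hpt)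
        _ = (1/4) * (a + b + (b + a)) - b / 2 := by
            rw [integral_sub (hIS2.const_mul _) hIre, integral_const_mul, hS2v, hre2]
    have hab : a - b = 1 / ((N:ℝ) * ((N:ℝ) + 1)) := by
      have hNpos : (0:ℝ) < (N:ℝ) * ((N:ℝ) + 1) := by positivity
      have ha2b : a = 2 * b := by linarith [hrot]
      have h1 : ((N:ℝ) * ((N:ℝ) + 1)) * b = 1 := by nlinarith [hrel1]
      have hb1 : b = 1 / ((N:ℝ) * ((N:ℝ) + 1)) := by
        field_simp
        linarith [h1]
      linarith [hb1]
    -- final assembly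
    have hfinC : ((∫ U, ‖X U - m‖ ^ 2 ∂μ : ℝ) : ℂ)
        = (((a - b) * ∑ j, ‖c j‖ ^ 2 : ℝ) : ℂ) := by
      rw [hint2, hcast]
      have hterm : ∀ j k : Fin N, (c j * star (c k)) * ((∫ U, q j U * q k U ∂μ : ℝ) : ℂ)
          = (c j * star (c k)) * ((b : ℝ) : ℂ)
            + (if j = k then (c j * star (c k)) * ((a - b : ℝ) : ℂ) else 0) := by
        intro j k
        by_cases h : j = k
        · subst h
          rw [hMjj j, if_pos rfl]
          push_cast
          ring
        · rw [hMjk j k h, if_neg h, add_zero]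
      rw [Finset.sum_congr rfl fun j _ => Finset.sum_congr rfl fun k _ => hterm j k,
        Finset.sum_congr rfl fun j (_ : j ∈ Finset.univ) => Finset.sum_add_distrib,
        Finset.sum_add_distrib]
      have h1 : ∑ j, ∑ k, (c j * star (c k)) * ((b : ℝ) : ℂ) = 0 := by
        have heq : ∑ j, ∑ k, (c j * star (c k)) * ((b : ℝ) : ℂ)
            = (∑ j, c j) * (∑ k, star (c k)) * ((b : ℝ) : ℂ) := by
          rw [Finset.sum_mul_sum, Finset.sum_mul]
          refine Finset.sum_congr rfl fun j _ => ?_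
          rw [Finset.sum_mul]
        rw [heq, hcsum]
        ring
      have h2 : ∑ j, ∑ k, (if j = k then (c j * star (c k)) * ((a - b : ℝ) : ℂ) else 0)
          = ((a - b : ℝ) : ℂ) * ∑ j, ((‖c j‖ ^ 2 : ℝ) : ℂ) := by
        rw [Finset.mul_sum]
        refine Finset.sum_congr rfl fun j _ => ?_
        rw [Finset.sum_ite_eq]
        simp only [Finset.mem_univ, if_true]
        rw [hcnorm j]
        ring
      rw [h1, h2, zero_add]
      push_cast
      ring
    have hfinR : ∫ U, ‖X U - m‖ ^ 2 ∂μ = (a - b) * ∑ j, ‖c j‖ ^ 2 :=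
      Complex.ofReal_injective hfinC
    rw [hfinR, hab]
end

section
/- Let A be a real symmetric N×N matrix (or any N×N matrix diagonalizable by a real orthogonal matrix, with real eigenvalues λ₁,…,λ_N), and m = (1/N) tr A. If x is uniformly distributed on the real unit sphere S^{N−1} and X = ⟨x, Ax⟩, then E[X] = m and E[(X − m)²] = (2/(N(N+2))) Σ_{j=1}^N (λ_j − m)². -/
open Real Set MeasureTheory Filter Asymptotics Metric Matrix
open scoped ENNReal NNReal



noncomputable def gI (k : ℕ) : ℝ := ∫ r in Ioi (0:ℝ), r ^ k * Real.exp (-r^2/2)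

lemma gI_integrableOn (k : ℕ) :
    IntegrableOn (fun r : ℝ => r ^ k * Real.exp (-r^2/2)) (Ioi 0) := by
  have h := integrableOn_rpow_mul_exp_neg_mul_sq (b := 1/2) (by norm_num) (s := k)
    (lt_of_lt_of_le (by norm_num) (Nat.cast_nonneg k))
  refine h.congr_fun (fun x hx => ?_) measurableSet_Ioi
  simp only [Real.rpow_natCast]
  ring_nf

lemma gI_pos (k : ℕ) : 0 < gI k := by
  rw [gI]
  refine (setIntegral_pos_iff_support_of_nonneg_ae ?_ (gI_integrableOn k)).2 ?_
  · filter_upwards [ae_restrict_mem measurableSet_Ioi] with x hx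
    have hx' : (0:ℝ) < x := hx
    positivity
  · have : Ioi (0:ℝ) ⊆ Function.support (fun r : ℝ => r ^ k * Real.exp (-r^2/2)) ∩ Ioi 0 := by
      intro x hx
      refine ⟨?_, hx⟩
      have : (0:ℝ) < x := hx
      simp only [Function.mem_support]
      positivity
    calc (0:ℝ≥0∞) < volume (Ioi (0:ℝ)) := by simp
    _ ≤ _ := measure_mono this

lemma gI_tendsto (k : ℕ) :
    Tendsto (fun r : ℝ => r ^ k * Real.exp (-r^2/2)) atTop (nhds 0) := by
  have h := rpow_mul_exp_neg_mul_sq_isLittleO_exp_neg (b := 1/2) (by norm_num) (k : ℝ)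
  have h2 : (fun r : ℝ => r ^ k * Real.exp (-r^2/2)) =ᶠ[atTop]
      (fun x : ℝ => x ^ (k:ℝ) * Real.exp (-(1/2) * x ^ 2)) := by
    filter_upwards [eventually_gt_atTop (0:ℝ)] with x hx
    rw [Real.rpow_natCast]
    ring_nf
  refine Tendsto.congr' h2.symm ?_
  exact h.isBigO.trans_tendsto (by
    have hb : Tendsto (fun x : ℝ => -(1/2) * x) atTop atBot := by
      have := (tendsto_id (α := ℝ) (x := atTop)).const_mul_atTop (by norm_num : (0:ℝ) < 1/2)
      exact (tendsto_neg_atTop_atBot.comp this).congr fun x => by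
        simp [Function.comp, neg_mul]
    exact Real.tendsto_exp_atBot.comp hb)

lemma gI_rec (k : ℕ) : gI (k + 2) = (k + 1) * gI k := by
  have key : ∫ r in Ioi (0:ℝ),
      (r ^ (k+2) * Real.exp (-r^2/2) - (k+1) * (r ^ k * Real.exp (-r^2/2))) = 0 := by
    have hderiv : ∀ x ∈ Ici (0:ℝ), HasDerivAt (fun r : ℝ => -(r ^ (k+1) * Real.exp (-r^2/2)))
        (x ^ (k+2) * Real.exp (-x^2/2) - (k+1) * (x ^ k * Real.exp (-x^2/2))) x := by
      intro x _
      have h1 : HasDerivAt (fun r : ℝ => r ^ (k+1)) ((k+1) * x ^ k) x := by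
        simpa using hasDerivAt_pow (k+1) x
      have h2 : HasDerivAt (fun r : ℝ => Real.exp (-r^2/2)) (Real.exp (-x^2/2) * (-x)) x := by
        have hx : HasDerivAt (fun r : ℝ => -r^2/2) (-x) x := by
          have := (hasDerivAt_pow 2 x).neg.div_const 2
          refine this.congr_deriv ?_
          push_cast; ring
        exact (Real.hasDerivAt_exp _).comp x hx
      have := (h1.mul h2).neg
      refine this.congr_deriv ?_
      push_cast
      ring
    have hint : IntegrableOn (fun r : ℝ =>
        r ^ (k+2) * Real.exp (-r^2/2) - (k+1) * (r ^ k * Real.exp (-r^2/2))) (Ioi 0) :=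
      (gI_integrableOn (k+2)).sub ((gI_integrableOn k).const_mul _)
    have := integral_Ioi_of_hasDerivAt_of_tendsto' hderiv hint ((gI_tendsto (k+1)).neg)
    simpa using this
  have h1 := gI_integrableOn (k+2)
  have h2 := (gI_integrableOn k).const_mul ((k:ℝ)+1)
  rw [integral_sub h1 h2, sub_eq_zero] at key
  rw [gI, gI, key, integral_const_mul]




lemma sphere_homog' {E : Type*} [NormedAddCommGroup E] [NormedSpace ℝ E]
    [MeasurableSpace E] [BorelSpace E] [FiniteDimensional ℝ E] [Nontrivial E]
    (μ : Measure E) [μ.IsAddHaarMeasure]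
    (N : ℕ) (hdim : Module.finrank ℝ E = N) (f : E → ℝ)
    (d : ℕ) (hhom : ∀ (r : ℝ), 0 < r → ∀ y, f (r • y) = r ^ d * f y) :
    ∫ x, f x * Real.exp (-‖x‖^2/2) ∂μ =
      (∫ y : sphere (0 : E) 1, f y ∂μ.toSphere) * gI (N - 1 + d) := by
  calc
    ∫ x, f x * Real.exp (-‖x‖^2/2) ∂μ
      = ∫ x : ({(0:E)}ᶜ : Set E), f x.1 * Real.exp (-‖x.1‖^2/2) ∂(μ.comap (↑)) := by
        rw [integral_subtype_comap (measurableSet_singleton _).compl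
          fun x : E => f x * Real.exp (-‖x‖^2/2), restrict_compl_singleton]
    _ = ∫ p : sphere (0:E) 1 × Ioi (0:ℝ),
          f p.1 * ((p.2:ℝ) ^ d * Real.exp (-(p.2:ℝ)^2/2))
          ∂(μ.toSphere.prod (.volumeIoiPow (Module.finrank ℝ E - 1))) := by
        rw [← μ.measurePreserving_homeomorphUnitSphereProd.integral_comp
          (Homeomorph.measurableEmbedding _)
          (fun p : sphere (0:E) 1 × Ioi (0:ℝ) =>
            f p.1 * ((p.2:ℝ) ^ d * Real.exp (-(p.2:ℝ)^2/2)))]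
        refine integral_congr_ae (Eventually.of_forall fun x => ?_)
        have hx : x.1 ≠ 0 := x.2
        have hn : (0:ℝ) < ‖x.1‖ := norm_pos_iff.2 hx
        simp only [homeomorphUnitSphereProd_apply_fst_coe,
          homeomorphUnitSphereProd_apply_snd_coe]
        rw [show f x.1 = ‖x.1‖ ^ d * f (‖x.1‖⁻¹ • x.1) by
          rw [← hhom _ hn, smul_inv_smul₀ hn.ne']]
        ring
    _ = (∫ y : sphere (0:E) 1, f y ∂μ.toSphere) *
          ∫ r : Ioi (0:ℝ), (r:ℝ) ^ d * Real.exp (-(r:ℝ)^2/2)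
            ∂(Measure.volumeIoiPow (Module.finrank ℝ E - 1)) :=
        integral_prod_mul (f := fun y : sphere (0:E) 1 => f y)
          (g := fun r : Ioi (0:ℝ) => (r:ℝ) ^ d * Real.exp (-(r:ℝ)^2/2))
    _ = _ := by
      congr 1
      simp only [Measure.volumeIoiPow, ENNReal.ofReal]
      rw [integral_withDensity_eq_integral_smul
        ((measurable_subtype_coe.pow_const _).real_toNNReal)]
      rw [integral_subtype_comap measurableSet_Ioi
        (fun a : ℝ => Real.toNNReal (a ^ (Module.finrank ℝ E - 1)) •
          (a ^ d * Real.exp (-a^2/2)))]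
      rw [gI, setIntegral_congr_fun measurableSet_Ioi
        (g := fun a : ℝ => a ^ (N - 1 + d) * Real.exp (-a^2/2))]
      intro x hx
      have hx' : (0:ℝ) < x := hx
      simp only []
      rw [NNReal.smul_def, Real.coe_toNNReal _ (pow_nonneg hx'.le _), hdim, pow_add, smul_eq_mul, mul_assoc]





noncomputable def gS : ℝ := 2 * gI 0

lemma gS_pos : 0 < gS := by have := gI_pos 0; rw [gS]; linarith

lemma gJ_integrable (k : ℕ) :
    Integrable (fun x : ℝ => x ^ k * Real.exp (-x^2/2)) := by
  have h := integrable_rpow_mul_exp_neg_mul_sq (b := 1/2) (by norm_num) (s := k)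
    (lt_of_lt_of_le (by norm_num) (Nat.cast_nonneg k))
  refine h.congr (Eventually.of_forall fun x => ?_)
  simp only [Real.rpow_natCast]
  ring_nf

lemma J_even (k : ℕ) :
    ∫ x : ℝ, x ^ (2*k) * Real.exp (-x^2/2) = 2 * gI (2*k) := by
  have hint := gJ_integrable (2*k)
  have hsplit := integral_add_compl (measurableSet_Ioi (a := (0:ℝ))) hint
  have hneg : ∫ x in Set.Iic (0:ℝ), x ^ (2*k) * Real.exp (-x^2/2)
      = ∫ x in Set.Ioi (0:ℝ), x ^ (2*k) * Real.exp (-x^2/2) := by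
    rw [show Set.Iic (0:ℝ) = Set.Iic (-0) by norm_num,
      ← integral_comp_neg_Ioi 0 (fun x => x ^ (2*k) * Real.exp (-x^2/2))]
    refine setIntegral_congr_fun measurableSet_Ioi fun x _ => ?_
    rw [Even.neg_pow (even_two_mul k), neg_sq]
  rw [← hsplit, compl_Ioi, hneg, gI]
  ring

lemma J0 : ∫ x : ℝ, Real.exp (-x^2/2) = gS := by
  have := J_even 0
  simpa [gS] using this

lemma J2 : ∫ x : ℝ, x ^ 2 * Real.exp (-x^2/2) = gS := by
  have h := J_even 1
  have h2 : gI 2 = gI 0 := by have := gI_rec 0; simpa using this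
  rw [show 2*1 = 2 from rfl] at h
  rw [h, h2, gS]

lemma J4 : ∫ x : ℝ, x ^ 4 * Real.exp (-x^2/2) = 3 * gS := by
  have h := J_even 2
  have h2 : gI 2 = gI 0 := by have := gI_rec 0; simpa using this
  have h4 : gI 4 = 3 * gI 2 := by have := gI_rec 2; norm_num at this; linarith
  rw [show 2*2 = 4 from rfl] at h
  rw [h, h4, h2, gS]; ring

lemma euclid_prod (N : ℕ) (h : Fin N → ℝ → ℝ) :
    ∫ x : EuclideanSpace ℝ (Fin N), ∏ j, h j (x j) = ∏ j, ∫ t : ℝ, h j t := by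
  rw [← ((EuclideanSpace.volume_preserving_symm_measurableEquiv_toLp (Fin N)).symm _).integral_comp
    (MeasurableEquiv.measurableEmbedding _) (fun x : EuclideanSpace ℝ (Fin N) => ∏ j, h j (x j))]
  exact MeasureTheory.integral_fintype_prod_eq_prod h

lemma integrable_prod_euclid (N : ℕ) (h : Fin N → ℝ → ℝ) (hint : ∀ j, Integrable (h j)) :
    Integrable (fun x : EuclideanSpace ℝ (Fin N) => ∏ j, h j (x j)) := by
  have hp : Integrable (fun y : Fin N → ℝ => ∏ j, h j (y j)) :=
    Integrable.fintype_prod_dep (f := fun j => h j) hint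
  have hmap := ((EuclideanSpace.volume_preserving_symm_measurableEquiv_toLp (Fin N)).symm _).map_eq
  rw [show (volume : Measure (EuclideanSpace ℝ (Fin N)))
    = Measure.map (MeasurableEquiv.toLp 2 (Fin N → ℝ)).symm.symm volume from hmap.symm]
  exact (integrable_map_equiv _ _).mpr hp

lemma gauss_prod (N : ℕ) (x : EuclideanSpace ℝ (Fin N)) :
    Real.exp (-‖x‖^2/2) = ∏ j, Real.exp (-(x j)^2/2) := by
  rw [← Real.exp_sum]
  congr 1
  have hn : ‖x‖^2 = ∑ j, (x j)^2 := by
    rw [EuclideanSpace.norm_eq, Real.sq_sqrt (by positivity)]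
    simp [sq_abs]
  rw [hn, ← Finset.sum_div, ← Finset.sum_neg_distrib]

noncomputable def gM (N : ℕ) (e : Fin N → ℕ) : ℝ :=
  ∫ x : EuclideanSpace ℝ (Fin N), (∏ k, (x k)^(e k)) * Real.exp (-‖x‖^2/2)

lemma gM_eq (N : ℕ) (e : Fin N → ℕ) :
    gM N e = ∏ k, ∫ t : ℝ, t^(e k) * Real.exp (-t^2/2) := by
  rw [gM]
  have : ∀ x : EuclideanSpace ℝ (Fin N), (∏ k, (x k)^(e k)) * Real.exp (-‖x‖^2/2)
      = ∏ k, ((x k)^(e k) * Real.exp (-(x k)^2/2)) := fun x => by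
    rw [gauss_prod, ← Finset.prod_mul_distrib]
  simp_rw [this]
  exact euclid_prod N (fun k t => t^(e k) * Real.exp (-t^2/2))

lemma gM_integrable (N : ℕ) (e : Fin N → ℕ) :
    Integrable (fun x : EuclideanSpace ℝ (Fin N) =>
      (∏ k, (x k)^(e k)) * Real.exp (-‖x‖^2/2)) := by
  have : ∀ x : EuclideanSpace ℝ (Fin N), (∏ k, (x k)^(e k)) * Real.exp (-‖x‖^2/2)
      = ∏ k, ((x k)^(e k) * Real.exp (-(x k)^2/2)) := fun x => by
    rw [gauss_prod, ← Finset.prod_mul_distrib]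
  simp_rw [this]
  exact integrable_prod_euclid N _ (fun j => gJ_integrable (e j))

lemma prod_single_pow (N : ℕ) (x : EuclideanSpace ℝ (Fin N)) (i j : Fin N) :
    ∏ k, (x k) ^ ((Pi.single i 2 + Pi.single j 2 : Fin N → ℕ) k)
      = (x i)^2 * (x j)^2 := by
  by_cases hij : i = j
  · subst hij
    rw [Finset.prod_eq_single i]
    · simp [← sq]
      try ring
    · intro b _ hb; simp [Pi.single_eq_of_ne hb]
    · simp
  · rw [← Finset.mul_prod_erase _ _ (Finset.mem_univ i),
      ← Finset.mul_prod_erase _ _ (Finset.mem_erase.mpr ⟨Ne.symm hij, Finset.mem_univ j⟩)]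
    rw [Finset.prod_eq_one]
    · simp [Pi.single_eq_of_ne hij, Pi.single_eq_of_ne (Ne.symm hij)]
      try ring
    · intro b hb
      simp only [Finset.mem_erase] at hb
      simp [Pi.single_eq_of_ne hb.2.1, Pi.single_eq_of_ne hb.1]

lemma gM_two (N : ℕ) (i j : Fin N) :
    gM N (Pi.single i 2 + Pi.single j 2) = (if i = j then 3 else 1) * gS ^ N := by
  rw [gM_eq]
  by_cases hij : i = j
  · subst hij
    simp only [if_pos rfl]
    rw [← Finset.mul_prod_erase _ _ (Finset.mem_univ i)]
    have hi : (Pi.single i 2 + Pi.single i 2 : Fin N → ℕ) i = 4 := by simp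
    have ho : ∀ b ∈ Finset.univ.erase i,
        (∫ t : ℝ, t^((Pi.single i 2 + Pi.single i 2 : Fin N → ℕ) b) * Real.exp (-t^2/2)) = gS := by
      intro b hb
      have hb' := (Finset.mem_erase.mp hb).1
      rw [show (Pi.single i 2 + Pi.single i 2 : Fin N → ℕ) b = 0 by
        simp [Pi.single_eq_of_ne hb']]
      simpa using J0
    rw [Finset.prod_congr rfl ho, Finset.prod_const, hi, J4,
      Finset.card_erase_of_mem (Finset.mem_univ i), Finset.card_univ, Fintype.card_fin]
    have hN : 0 < N := i.pos
    rw [mul_assoc, ← pow_succ', Nat.sub_add_cancel hN]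
    simp
  · simp only [if_neg hij, one_mul]
    have ho : ∀ b ∈ Finset.univ,
        (∫ t : ℝ, t^((Pi.single i 2 + Pi.single j 2 : Fin N → ℕ) b) * Real.exp (-t^2/2)) = gS := by
      intro b _
      by_cases hbi : b = i
      · subst hbi
        rw [show (Pi.single b 2 + Pi.single j 2 : Fin N → ℕ) b = 2 by
          simp [Pi.single_eq_of_ne hij]]
        exact J2
      · by_cases hbj : b = j
        · subst hbj
          rw [show (Pi.single i 2 + Pi.single b 2 : Fin N → ℕ) b = 2 by
            simp [Pi.single_eq_of_ne (Ne.symm hij)]]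
          exact J2
        · rw [show (Pi.single i 2 + Pi.single j 2 : Fin N → ℕ) b = 0 by
            simp [Pi.single_eq_of_ne hbi, Pi.single_eq_of_ne hbj]]
          simpa using J0
    rw [Finset.prod_congr rfl ho, Finset.prod_const, Finset.card_univ, Fintype.card_fin]


lemma prod_single_pow1 (N : ℕ) (x : EuclideanSpace ℝ (Fin N)) (i : Fin N) :
    ∏ k, (x k) ^ ((Pi.single i 2 : Fin N → ℕ) k) = (x i)^2 := by
  rw [Finset.prod_eq_single i]
  · simp
  · intro b _ hb; simp [Pi.single_eq_of_ne hb]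
  · simp

lemma gM_one (N : ℕ) (i : Fin N) : gM N (Pi.single i 2) = gS ^ N := by
  rw [gM_eq]
  have ho : ∀ b ∈ Finset.univ,
      (∫ t : ℝ, t^((Pi.single i 2 : Fin N → ℕ) b) * Real.exp (-t^2/2)) = gS := by
    intro b _
    by_cases hbi : b = i
    · subst hbi
      rw [show (Pi.single b 2 : Fin N → ℕ) b = 2 by simp]
      exact J2
    · rw [show (Pi.single i 2 : Fin N → ℕ) b = 0 by simp [Pi.single_eq_of_ne hbi]]
      simpa using J0
  rw [Finset.prod_congr rfl ho, Finset.prod_const, Finset.card_univ, Fintype.card_fin]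

lemma int_gauss_total (N : ℕ) :
    ∫ x : EuclideanSpace ℝ (Fin N), Real.exp (-‖x‖^2/2) = gS ^ N := by
  have h := gM_eq N (fun _ => 0)
  rw [gM] at h
  simp only [pow_zero, Finset.prod_const_one, one_mul] at h
  rw [h, show (∏ _k : Fin N, ∫ t : ℝ, Real.exp (-t^2/2)) = ∏ _k : Fin N, gS from
    Finset.prod_congr rfl fun k _ => J0,
    Finset.prod_const, Finset.card_univ, Fintype.card_fin]




lemma mulVec_dot {N : ℕ} {V : Matrix (Fin N) (Fin N) ℝ} (hV : Vᵀ * V = 1)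
    (a b : Fin N → ℝ) : (V *ᵥ a) ⬝ᵥ (V *ᵥ b) = a ⬝ᵥ b := by
  rw [Matrix.dotProduct_mulVec, Matrix.vecMul_mulVec, hV, Matrix.vecMul_one]

noncomputable def matIso {N : ℕ} (V : Matrix (Fin N) (Fin N) ℝ) (hV : Vᵀ * V = 1) :
    EuclideanSpace ℝ (Fin N) ≃ₗᵢ[ℝ] EuclideanSpace ℝ (Fin N) :=
  LinearIsometry.toLinearIsometryEquiv
    (LinearMap.isometryOfInner (Matrix.toEuclideanLin V) (by
      intro x y
      simp only [PiLp.inner_apply, RCLike.inner_apply, starRingEnd_apply, star_trivial]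
      exact mulVec_dot hV (fun j => y j) (fun j => x j))) rfl

lemma matIso_apply {N : ℕ} (V : Matrix (Fin N) (Fin N) ℝ) (hV : Vᵀ * V = 1)
    (y : EuclideanSpace ℝ (Fin N)) (i : Fin N) :
    (matIso V hV y) i = (V *ᵥ (fun j => y j)) i := rfl

lemma rot_integral {N : ℕ} (V : Matrix (Fin N) (Fin N) ℝ) (hV : Vᵀ * V = 1)
    (g : EuclideanSpace ℝ (Fin N) → ℝ) :
    ∫ x, g x = ∫ y, g (matIso V hV y) :=
  ((matIso V hV).measurePreserving.integral_comp
    (matIso V hV).toHomeomorph.measurableEmbedding g).symm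

lemma int_Q (N : ℕ) (v : Fin N → ℝ) :
    ∫ x : EuclideanSpace ℝ (Fin N), (∑ i, v i * (x i)^2) * Real.exp (-‖x‖^2/2)
      = (∑ i, v i) * gS ^ N := by
  have hrw : ∀ x : EuclideanSpace ℝ (Fin N),
      (∑ i, v i * (x i)^2) * Real.exp (-‖x‖^2/2)
      = ∑ i, v i * ((∏ k, (x k)^((Pi.single i 2 : Fin N → ℕ) k)) * Real.exp (-‖x‖^2/2)) := by
    intro x
    rw [Finset.sum_mul]
    refine Finset.sum_congr rfl fun i _ => ?_
    rw [prod_single_pow1]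
    ring
  simp_rw [hrw]
  rw [integral_finset_sum _ fun i _ => (gM_integrable N (Pi.single i 2)).const_mul (v i)]
  simp_rw [integral_const_mul]
  have : ∀ i, (∫ x : EuclideanSpace ℝ (Fin N),
      (∏ k, (x k)^((Pi.single i 2 : Fin N → ℕ) k)) * Real.exp (-‖x‖^2/2)) = gS ^ N :=
    fun i => gM_one N i
  simp_rw [this, ← Finset.sum_mul]

lemma int_Q2 (N : ℕ) (v : Fin N → ℝ) :
    ∫ x : EuclideanSpace ℝ (Fin N), (∑ i, v i * (x i)^2)^2 * Real.exp (-‖x‖^2/2)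
      = ((∑ i, v i)^2 + 2 * ∑ i, (v i)^2) * gS ^ N := by
  have hrw : ∀ x : EuclideanSpace ℝ (Fin N),
      (∑ i, v i * (x i)^2)^2 * Real.exp (-‖x‖^2/2)
      = ∑ i, ∑ j, (v i * v j) *
          ((∏ k, (x k)^((Pi.single i 2 + Pi.single j 2 : Fin N → ℕ) k))
            * Real.exp (-‖x‖^2/2)) := by
    intro x
    rw [sq, Finset.sum_mul_sum, Finset.sum_mul]
    refine Finset.sum_congr rfl fun i _ => ?_
    rw [Finset.sum_mul]
    refine Finset.sum_congr rfl fun j _ => ?_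
    rw [prod_single_pow]
    ring
  simp_rw [hrw]
  rw [integral_finset_sum _ fun i _ => ?_]
  swap
  · exact integrable_finset_sum _ fun j _ =>
      (gM_integrable N (Pi.single i 2 + Pi.single j 2)).const_mul _
  have hij : ∀ i j : Fin N, (∫ x : EuclideanSpace ℝ (Fin N),
      (v i * v j) * ((∏ k, (x k)^((Pi.single i 2 + Pi.single j 2 : Fin N → ℕ) k))
        * Real.exp (-‖x‖^2/2)))
      = v i * v j * ((if i = j then 3 else 1) * gS ^ N) := by
    intro i j
    rw [integral_const_mul]
    congr 1
    exact gM_two N i j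
  have hsum : ∀ i : Fin N, (∫ x : EuclideanSpace ℝ (Fin N), ∑ j, (v i * v j) *
      ((∏ k, (x k)^((Pi.single i 2 + Pi.single j 2 : Fin N → ℕ) k))
        * Real.exp (-‖x‖^2/2)))
      = ∑ j, v i * v j * ((if i = j then 3 else 1) * gS ^ N) := by
    intro i
    exact (integral_finset_sum Finset.univ (fun j _ =>
      (gM_integrable N (Pi.single i 2 + Pi.single j 2)).const_mul (v i * v j))).trans
      (Finset.sum_congr rfl fun j _ => hij i j)
  simp_rw [hsum]
  have expand : ∀ i j : Fin N, v i * v j * ((if i = j then 3 else 1) * gS ^ N)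
      = v i * v j * gS ^ N + (if i = j then 2 * ((v i)^2 * gS ^ N) else 0) := by
    intro i j
    by_cases h : i = j
    · subst h; simp; ring
    · simp [h]
  simp_rw [expand, Finset.sum_add_distrib, Finset.sum_ite_eq, Finset.mem_univ, if_pos]
  rw [show (∑ x : Fin N, ∑ y : Fin N, v x * v y * gS ^ N) = (∑ i, v i)^2 * gS^N by
      rw [sq, Finset.sum_mul_sum, Finset.sum_mul]
      exact Finset.sum_congr rfl fun i _ => (Finset.sum_mul _ _ _).symm,
    show (∑ x : Fin N, 2 * (v x ^2 * gS^N)) = (2 * ∑ i, (v i)^2) * gS^N by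
      rw [Finset.mul_sum, Finset.sum_mul]
      exact Finset.sum_congr rfl fun i _ => by ring]
  ring


/-- Let `A = V diag(λ) Vᵀ` with `V ∈ O(N)` and real eigenvalues `λ`, and
`m = tr A / N`.  For `x` uniformly distributed on the real unit sphere
`S^(N-1)` and `X = ⟨x, Ax⟩`, one has `E[X] = m` and
`E[(X - m)²] = (2/(N(N+2))) ∑_j (λ_j - m)²`. -/
theorem stmt_12 (N : ℕ) (hN : 0 < N)
    (A V : Matrix (Fin N) (Fin N) ℝ) (lam : Fin N → ℝ)
    (hV : V ∈ Matrix.orthogonalGroup (Fin N) ℝ)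
    (hA : A = V * Matrix.diagonal lam * Vᵀ) :
    let μS := (volume : Measure (EuclideanSpace ℝ (Fin N))).toSphere
    let μ : Measure (Metric.sphere (0 : EuclideanSpace ℝ (Fin N)) 1) :=
      (μS Set.univ)⁻¹ • μS
    let m : ℝ := A.trace / N
    let X : Metric.sphere (0 : EuclideanSpace ℝ (Fin N)) 1 → ℝ := fun x =>
      (x : EuclideanSpace ℝ (Fin N)) ⬝ᵥ A.mulVec (x : EuclideanSpace ℝ (Fin N))
    (∫ x, X x ∂μ = m) ∧
    (∫ x, (X x - m) ^ 2 ∂μ) = 2 / (N * (N + 2)) * ∑ j, (lam j - m) ^ 2 := by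
  intro μS μ m X
  haveI : Nonempty (Fin N) := ⟨⟨0, hN⟩⟩
  haveI : Nontrivial (EuclideanSpace ℝ (Fin N)) := inferInstance
  have hVt : Vᵀ * V = 1 := by
    have h := (Matrix.mem_orthogonalGroup_iff' (Fin N) ℝ).mp hV
    simpa using h
  have htr : A.trace = ∑ i, lam i := by
    rw [hA, Matrix.trace_mul_cycle, hVt, Matrix.one_mul, Matrix.trace_diagonal]
  have hNR : (0:ℝ) < (N:ℝ) := by exact_mod_cast hN
  set T : ℝ := (μS Set.univ).toReal with hTdef
  set a : ℝ := gI (N-1) with hadef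
  have hqnorm : ∀ x : EuclideanSpace ℝ (Fin N), ∑ i, (x i)^2 = ‖x‖^2 := by
    intro x
    rw [EuclideanSpace.norm_eq, Real.sq_sqrt (by positivity)]
    simp [sq_abs]
  have hLcoord : ∀ (y : EuclideanSpace ℝ (Fin N)),
      (fun j => (matIso V hVt y) j) = V *ᵥ (fun j => y j) :=
    fun y => funext fun i => rfl
  have hrotf1 : ∀ y : EuclideanSpace ℝ (Fin N),
      (matIso V hVt y) ⬝ᵥ A.mulVec (matIso V hVt y) = ∑ i, lam i * (y i)^2 := by
    intro y
    show (fun j => (matIso V hVt y) j) ⬝ᵥ A.mulVec (fun j => (matIso V hVt y) j) = _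
    rw [hLcoord y, hA, Matrix.mulVec_mulVec,
      show V * Matrix.diagonal lam * Vᵀ * V = V * Matrix.diagonal lam by
        rw [Matrix.mul_assoc (V * Matrix.diagonal lam), hVt, Matrix.mul_one],
      Matrix.dotProduct_mulVec, Matrix.vecMul_mulVec,
      show Vᵀ * (V * Matrix.diagonal lam) = Matrix.diagonal lam by
        rw [← Matrix.mul_assoc, hVt, Matrix.one_mul]]
    rw [dotProduct]
    refine Finset.sum_congr rfl fun i _ => ?_
    rw [Matrix.vecMul_diagonal]
    ring
  have hhomf1 : ∀ (r : ℝ), 0 < r → ∀ x : EuclideanSpace ℝ (Fin N),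
      ((r • x : EuclideanSpace ℝ (Fin N)) ⬝ᵥ
        A.mulVec (r • x : EuclideanSpace ℝ (Fin N)))
      = r ^ 2 * (x ⬝ᵥ A.mulVec x) := by
    intro r _ x
    show ((r • (fun j => x j)) ⬝ᵥ A.mulVec (r • fun j => x j)) = _
    rw [Matrix.mulVec_smul, dotProduct_smul, smul_dotProduct,
      smul_smul, smul_eq_mul, sq]
  have hhomq : ∀ (r : ℝ) (x : EuclideanSpace ℝ (Fin N)),
      ∑ i, ((r • x : EuclideanSpace ℝ (Fin N)) i)^2 = r^2 * ∑ i, (x i)^2 := by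
    intro r x
    rw [Finset.mul_sum]
    refine Finset.sum_congr rfl fun i _ => ?_
    show (r * x i)^2 = _
    ring
  -- Gaussian values
  have hG1 : ∫ x : EuclideanSpace ℝ (Fin N), (x ⬝ᵥ A.mulVec x) * Real.exp (-‖x‖^2/2)
      = (∑ i, lam i) * gS ^ N := by
    rw [rot_integral V hVt (fun x => (x ⬝ᵥ A.mulVec x) * Real.exp (-‖x‖^2/2))]
    rw [show (fun y : EuclideanSpace ℝ (Fin N) =>
        ((matIso V hVt y) ⬝ᵥ A.mulVec (matIso V hVt y)) * Real.exp (-‖matIso V hVt y‖^2/2))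
        = fun y : EuclideanSpace ℝ (Fin N) =>
          (∑ i, lam i * (y i)^2) * Real.exp (-‖y‖^2/2) from
      funext fun y => by rw [hrotf1 y, (matIso V hVt).norm_map]]
    exact int_Q N lam
  have hmval : m = (∑ i, lam i) / N := by
    rw [show m = A.trace / (N:ℝ) from rfl, htr]
  have hzero : ∑ i, (lam i - m) = 0 := by
    rw [Finset.sum_sub_distrib, Finset.sum_const, Finset.card_univ, Fintype.card_fin,
      hmval, nsmul_eq_mul]
    field_simp
    ring
  have hG2 : ∫ x : EuclideanSpace ℝ (Fin N),
      ((x ⬝ᵥ A.mulVec x) - m * ∑ i, (x i)^2)^2 * Real.exp (-‖x‖^2/2)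
      = (2 * ∑ i, (lam i - m)^2) * gS ^ N := by
    rw [rot_integral V hVt (fun x =>
      ((x ⬝ᵥ A.mulVec x) - m * ∑ i, (x i)^2)^2 * Real.exp (-‖x‖^2/2))]
    rw [show (fun y : EuclideanSpace ℝ (Fin N) =>
        (((matIso V hVt y) ⬝ᵥ A.mulVec (matIso V hVt y))
          - m * ∑ i, ((matIso V hVt y) i)^2)^2 * Real.exp (-‖matIso V hVt y‖^2/2))
        = fun y : EuclideanSpace ℝ (Fin N) =>
          (∑ i, (lam i - m) * (y i)^2)^2 * Real.exp (-‖y‖^2/2) from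
      funext fun y => by
        rw [hrotf1 y, (matIso V hVt).norm_map, hqnorm, (matIso V hVt).norm_map,
          ← hqnorm]
        congr 2
        rw [Finset.mul_sum, ← Finset.sum_sub_distrib]
        exact Finset.sum_congr rfl fun i _ => by ring]
    rw [int_Q2 N (fun i => lam i - m), hzero]
    norm_num
  -- sphere relations
  have hs0 : T * a = gS ^ N := by
    have h := sphere_homog' (volume : Measure (EuclideanSpace ℝ (Fin N))) N
      finrank_euclideanSpace_fin (fun _ => (1:ℝ)) 0 (fun r hr y => by simp)
    simp only [one_mul, pow_zero, Nat.add_zero] at h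
    rw [int_gauss_total, integral_const, smul_eq_mul, mul_one] at h
    exact h.symm
  have hs1 : (∫ y, X y ∂μS) * gI (N+1) = (∑ i, lam i) * gS ^ N := by
    have h := sphere_homog' (volume : Measure (EuclideanSpace ℝ (Fin N))) N
      finrank_euclideanSpace_fin (fun x => x ⬝ᵥ A.mulVec x) 2 hhomf1
    rw [show N - 1 + 2 = N + 1 by omega, hG1] at h
    exact h.symm
  have hs2 : (∫ y, (X y - m)^2 ∂μS) * gI (N+3)
      = (2 * ∑ i, (lam i - m)^2) * gS ^ N := by
    have h := sphere_homog' (volume : Measure (EuclideanSpace ℝ (Fin N))) N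
      finrank_euclideanSpace_fin
      (fun x => ((x ⬝ᵥ A.mulVec x) - m * ∑ i, (x i)^2)^2) 4
      (fun r hr x => by
        simp only []
        rw [hhomf1 r hr x, hhomq r x]
        ring)
    rw [show N - 1 + 4 = N + 3 by omega, hG2] at h
    rw [show (∫ y, (X y - m)^2 ∂μS)
        = ∫ y : Metric.sphere (0 : EuclideanSpace ℝ (Fin N)) 1,
            (((y : EuclideanSpace ℝ (Fin N)) ⬝ᵥ
              A.mulVec (y : EuclideanSpace ℝ (Fin N)))
              - m * ∑ i, ((y : EuclideanSpace ℝ (Fin N)) i)^2)^2 ∂μS from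
      integral_congr_ae (Filter.Eventually.of_forall fun y => by
        have hy : ‖(y : EuclideanSpace ℝ (Fin N))‖ = 1 :=
          mem_sphere_zero_iff_norm.mp y.2
        have hy1 : ∑ i, ((y : EuclideanSpace ℝ (Fin N)) i)^2 = 1 := by
          rw [hqnorm, hy]; norm_num
        show (X y - m)^2 = ((y : EuclideanSpace ℝ (Fin N)) ⬝ᵥ
          A.mulVec (y : EuclideanSpace ℝ (Fin N))
          - m * ∑ i, ((y : EuclideanSpace ℝ (Fin N)) i)^2)^2
        rw [hy1, mul_one])]
    exact h.symm
  have hgI1 : gI (N+1) = N * a := by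
    have h := gI_rec (N-1)
    rw [show N - 1 + 2 = N + 1 by omega] at h
    rw [h, hadef]
    congr 1
    rw [Nat.cast_sub hN]
    norm_num
  have hgI3 : gI (N+3) = ((N:ℝ)+2) * gI (N+1) := by
    have h := gI_rec (N+1)
    rw [show N + 1 + 2 = N + 3 from rfl] at h
    rw [h]
    push_cast
    ring
  have hapos : 0 < a := gI_pos _
  have hgSN : 0 < gS ^ N := pow_pos gS_pos N
  have hTval : T = gS ^ N / a := by
    rw [eq_div_iff hapos.ne']
    exact hs0
  have hμint : ∀ g : (Metric.sphere (0 : EuclideanSpace ℝ (Fin N)) 1) → ℝ,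
      ∫ y, g y ∂μ = T⁻¹ * ∫ y, g y ∂μS := by
    intro g
    rw [show μ = (μS Set.univ)⁻¹ • μS from rfl, integral_smul_measure,
      ENNReal.toReal_inv, smul_eq_mul, hTdef]
  constructor
  · rw [hμint X]
    have hIX : ∫ y, X y ∂μS = (∑ i, lam i) * gS ^ N / ((N:ℝ) * a) := by
      rw [eq_div_iff (by positivity), ← hgI1]
      exact hs1
    rw [hIX, hmval, hTval]
    field_simp
  · rw [hμint (fun y => (X y - m)^2)]
    have hIX2 : ∫ y, (X y - m)^2 ∂μS
        = (2 * ∑ i, (lam i - m)^2) * gS ^ N / ((N:ℝ) * ((N:ℝ)+2) * a) := by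
      rw [eq_div_iff (by positivity),
        show (N:ℝ) * ((N:ℝ)+2) * a = gI (N+3) by rw [hgI3, hgI1]; ring]
      exact hs2
    rw [hIX2, hTval]
    field_simp
end
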